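/- arXiv:1203.5169 — 3 statements merged into one kernel-verified Lean document; each statement's English description precedes it below -/
import Mathlib

section
/- For every positive integer n, there exists a universal cycle for W(n): a cyclic sequence a₀a₁…a_{N−1} over ℕ of length N = |W(n)| such that the N cyclic windows a_i a_{i+1} ⋯ a_{i+n−1} (indices taken modulo N), for i = 0,…,N−1, are precisely the elements of W(n), each occurring exactly once. -/
/-- A word `w` over ℕ is a *weak order word* of length `n` if it has length `n`
and its set of letters is `{0, 1, …, h}` for some `h`. `weakOrders n` is the set
`W(n)` of all such words. -/
def weakOrders (n : ℕ) : Set (List ℕ) :=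
  {w | w.length = n ∧ ∃ h : ℕ, w.toFinset = Finset.range (h + 1)}

namespace UCWO

set_option linter.unusedSectionVars false

variable {α V : Type} [DecidableEq α] [DecidableEq V] (s t : α → V)

/-- count of edges in list with source u -/
lemma count_open (x : V) (E : List α) (hE : E ≠ []) (hc : E.Chain' (fun e f => t e = s f)) :
    E.countP (fun e => decide (s e = x)) + (if t (E.getLast hE) = x then 1 else 0)
      = E.countP (fun e => decide (t e = x)) + (if s (E.head hE) = x then 1 else 0) := by
  induction E with
  | nil => exact absurd rfl hE
  | cons e E ih =>
    cases E with
    | nil =>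
      simp [List.countP_cons]
      split_ifs <;> simp_all
    | cons e' E' =>
      have hc' : (e' :: E').Chain' (fun e f => t e = s f) := hc.tail
      have hte : t e = s e' := (List.isChain_cons_cons.mp hc).1
      have ihh := ih (List.cons_ne_nil _ _) hc'
      rw [List.getLast_cons (List.cons_ne_nil _ _)]
      simp only [List.countP_cons, List.head_cons, decide_eq_true_eq] at *
      rw [hte]
      by_cases hx : s e = x <;> by_cases hx' : s e' = x <;>
        simp only [hx, hx', if_true, if_false] at ihh ⊢ <;> omega

lemma count_closed (x : V) (E : List α) (hE : E ≠ []) (hc : E.Chain' (fun e f => t e = s f))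
    (hcl : t (E.getLast hE) = s (E.head hE)) :
    E.countP (fun e => decide (s e = x)) = E.countP (fun e => decide (t e = x)) := by
  have h := count_open s t x E hE hc
  rw [hcl] at h
  split_ifs at h <;> omega

lemma countP_eq_card_filter {p : α → Prop} [DecidablePred p] (l : List α) (hl : l.Nodup) :
    l.countP (fun e => decide (p e)) = (l.toFinset.filter p).card := by
  rw [List.countP_eq_length_filter, ← List.toFinset_card_of_nodup (hl.filter _),
    List.toFinset_filter]
  congr 1
  exact Finset.filter_congr (fun x _ => by simp)


/-- If an open trail in a balanced edge set `G` ends at `w ≠ u` (starting at `u`),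
there is an unused out-edge at `w`. -/
lemma exists_unused_step (G : Finset α)
    (bal : ∀ x, (G.filter fun e => t e = x).card = (G.filter fun e => s e = x).card) (u : V)
    (P : List α) (hP : P ≠ []) (hc : P.Chain' (fun e f => t e = s f)) (hnd : P.Nodup)
    (hsub : ∀ e ∈ P, e ∈ G) (hhead : s (P.head hP) = u) (hend : t (P.getLast hP) ≠ u) :
    ∃ e, e ∈ G ∧ s e = t (P.getLast hP) ∧ e ∉ P := by
  set w := t (P.getLast hP) with hw
  have hcount := count_open s t w P hP hc
  rw [if_pos rfl, if_neg (by rw [hhead]; exact fun h => hend h.symm)] at hcount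
  have hcs : P.countP (fun e => decide (s e = w)) = (P.toFinset.filter (fun e => s e = w)).card :=
    countP_eq_card_filter _ hnd
  have hct : P.countP (fun e => decide (t e = w)) = (P.toFinset.filter (fun e => t e = w)).card :=
    countP_eq_card_filter _ hnd
  have hsub' : P.toFinset ⊆ G := fun x hx => hsub x (List.mem_toFinset.mp hx)
  have hmono : (P.toFinset.filter (fun e => t e = w)).card ≤ (G.filter (fun e => t e = w)).card :=
    Finset.card_le_card (Finset.filter_subset_filter _ hsub')
  have hlt : (P.toFinset.filter (fun e => s e = w)).card < (G.filter (fun e => s e = w)).card := by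
    rw [← bal w]
    omega
  have hns : ¬ ((G.filter (fun e => s e = w)) ⊆ P.toFinset.filter (fun e => s e = w)) :=
    fun h => absurd (Finset.card_le_card h) (not_le.mpr hlt)
  obtain ⟨e, heG, heP⟩ := Finset.not_subset.mp hns
  exact ⟨e, (Finset.mem_filter.mp heG).1, (Finset.mem_filter.mp heG).2, fun h =>
    heP (Finset.mem_filter.mpr ⟨List.mem_toFinset.mpr h, (Finset.mem_filter.mp heG).2⟩)⟩

/-- From a vertex `u` with an out-edge in a balanced edge set `G`, there is a
closed nonempty trail starting and ending at `u`. -/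
lemma extend_aux (G : Finset α)
    (bal : ∀ x, (G.filter fun e => t e = x).card = (G.filter fun e => s e = x).card) (u : V) :
    ∀ (k : ℕ) (P : List α) (hP : P ≠ []), P.Chain' (fun e f => t e = s f) → P.Nodup →
      (∀ e ∈ P, e ∈ G) → s (P.head hP) = u → G.card - P.length ≤ k →
      ∃ (Q : List α) (hQ : Q ≠ []), Q.Chain' (fun e f => t e = s f) ∧ Q.Nodup ∧
        (∀ e ∈ Q, e ∈ G) ∧ s (Q.head hQ) = u ∧ t (Q.getLast hQ) = u := by
  intro k
  induction k with
  | zero =>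
    intro P hP hc hnd hsub hhead hcard
    by_cases hend : t (P.getLast hP) = u
    · exact ⟨P, hP, hc, hnd, hsub, hhead, hend⟩
    · exfalso
      obtain ⟨e, heG, hse, heP⟩ := exists_unused_step s t G bal u P hP hc hnd hsub hhead hend
      have hlen : P.length = P.toFinset.card := (List.toFinset_card_of_nodup hnd).symm
      have hsub' : P.toFinset ⊆ G := fun x hx => hsub x (List.mem_toFinset.mp hx)
      have h1 : insert e P.toFinset ⊆ G := by
        intro x hx
        rcases Finset.mem_insert.mp hx with rfl | hx
        · exact heG
        · exact hsub' hx
      have h2 : (insert e P.toFinset).card ≤ G.card := Finset.card_le_card h1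
      rw [Finset.card_insert_of_notMem (fun h => heP (List.mem_toFinset.mp h))] at h2
      omega
  | succ k ih =>
    intro P hP hc hnd hsub hhead hcard
    by_cases hend : t (P.getLast hP) = u
    · exact ⟨P, hP, hc, hnd, hsub, hhead, hend⟩
    · obtain ⟨e, heG, hse, heP⟩ := exists_unused_step s t G bal u P hP hc hnd hsub hhead hend
      have hP' : P ++ [e] ≠ [] := by simp
      have hc' : (P ++ [e]).Chain' (fun e f => t e = s f) := by
        rw [List.Chain', List.isChain_append]
        refine ⟨hc, List.isChain_singleton _, ?_⟩
        intro x hx y hy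
        rw [List.getLast?_eq_getLast hP] at hx
        simp at hx hy
        rw [← hx, ← hy, hse]
      have hnd' : (P ++ [e]).Nodup := by
        rw [List.nodup_append]
        exact ⟨hnd, List.nodup_singleton _, by simp; exact fun a ha h => heP (h ▸ ha)⟩
      have hsub2 : ∀ f ∈ P ++ [e], f ∈ G := by
        intro f hf
        rcases List.mem_append.mp hf with hf | hf
        · exact hsub f hf
        · simp at hf; rwa [hf]
      have hhead' : s ((P ++ [e]).head hP') = u := by
        rwa [List.head_append_of_ne_nil hP]
      have hcard' : G.card - (P ++ [e]).length ≤ k := by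
        simp only [List.length_append, List.length_singleton]
        omega
      exact ih (P ++ [e]) hP' hc' hnd' hsub2 hhead' hcard'


def IsClosed (E : List α) : Prop :=
  E ≠ [] ∧ E.Chain' (fun e f => t e = s f) ∧ ∀ a ∈ E.getLast?, ∀ b ∈ E.head?, t a = s b

lemma isClosed_rot (x : α) (L : List α) (h : IsClosed s t (x :: L)) :
    IsClosed s t (L ++ [x]) := by
  obtain ⟨-, hc, hcl⟩ := h
  cases L with
  | nil => exact ⟨by simp, List.isChain_singleton _, by simpa using hcl⟩
  | cons y L' =>
    refine ⟨by simp, ?_, ?_⟩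
    · rw [List.Chain', List.isChain_append]
      refine ⟨hc.tail, List.isChain_singleton _, ?_⟩
      intro a ha b hb
      simp at hb
      subst hb
      have : (x :: y :: L').getLast? = (y :: L').getLast? := by
        rw [List.getLast?_eq_getLast (by simp), List.getLast?_eq_getLast (by simp),
          List.getLast_cons (by simp)]
      exact hcl a (by rw [← this] at ha; exact ha) x (by simp)
    · intro a ha b hb
      rw [List.getLast?_append] at ha
      simp at ha hb
      subst ha
      subst hb
      exact (List.isChain_cons_cons.mp hc).1

lemma isClosed_append_comm (A : List α) : ∀ (B : List α),
    IsClosed s t (A ++ B) → IsClosed s t (B ++ A) := by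
  induction A with
  | nil => intro B h; simpa using h
  | cons x A' ih =>
    intro B h
    have h1 : IsClosed s t ((A' ++ B) ++ [x]) := isClosed_rot s t x _ h
    rw [List.append_assoc] at h1
    have h2 := ih (B ++ [x]) h1
    rwa [List.append_assoc] at h2

lemma isClosed_succ (E : List α) (h : IsClosed s t E) (f : α) (hf : f ∈ E) :
    ∃ f' ∈ E, s f' = t f := by
  obtain ⟨hne, hc, hcl⟩ := h
  obtain ⟨i, hfi⟩ := List.mem_iff_get.mp hf
  by_cases hi : (i : ℕ) + 1 < E.length
  · refine ⟨E.get ⟨i + 1, hi⟩, List.get_mem E _, ?_⟩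
    have := List.isChain_iff_getElem.mp hc i (by omega)
    rw [← hfi]
    exact this.symm
  · have hlast : E.getLast hne = f := by
      rw [List.getLast_eq_getElem]
      rw [← hfi]
      simp only [List.get_eq_getElem]
      congr 1
      omega
    refine ⟨E.head hne, List.head_mem hne, ?_⟩
    have := hcl (E.getLast hne) (by rw [List.getLast?_eq_getLast hne]; rfl)
      (E.head hne) (by rw [List.head?_eq_head hne]; rfl)
    rw [hlast] at this
    exact this.symm

lemma card_filter_sdiff (F : Finset α) (T' : Finset α) (hsub : T' ⊆ F)
    (p : α → Prop) [DecidablePred p] :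
    (F.filter p).card = (T'.filter p).card + ((F \ T').filter p).card := by
  conv_lhs => rw [← Finset.union_sdiff_of_subset hsub]
  rw [Finset.filter_union, Finset.card_union_of_disjoint
    (Finset.disjoint_filter_filter Finset.disjoint_sdiff)]

lemma diff_bal (F : Finset α)
    (bal : ∀ x, (F.filter fun e => t e = x).card = (F.filter fun e => s e = x).card)
    (T : List α) (hcl : IsClosed s t T) (hnd : T.Nodup) (hsub : T.toFinset ⊆ F) :
    ∀ x, ((F \ T.toFinset).filter fun e => t e = x).card
        = ((F \ T.toFinset).filter fun e => s e = x).card := by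
  intro x
  obtain ⟨hne, hc, hclo⟩ := hcl
  have hcc : T.countP (fun e => decide (s e = x)) = T.countP (fun e => decide (t e = x)) := by
    apply count_closed s t x T hne hc
    exact hclo _ (by rw [List.getLast?_eq_getLast hne]; rfl) _
      (by rw [List.head?_eq_head hne]; rfl)
  rw [countP_eq_card_filter _ hnd, countP_eq_card_filter _ hnd] at hcc
  have h1 := card_filter_sdiff F T.toFinset hsub (fun e => t e = x)
  have h2 := card_filter_sdiff F T.toFinset hsub (fun e => s e = x)
  have := bal x
  omega


lemma main_aux (F : Finset α)
    (bal : ∀ x, (F.filter fun e => t e = x).card = (F.filter fun e => s e = x).card)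
    (conn : ∀ T : Finset α, T ⊆ F → T.Nonempty → T ≠ F →
      ∃ e ∈ F, e ∉ T ∧ ∃ f ∈ T, s e = s f ∨ s e = t f ∨ t e = s f ∨ t e = t f) :
    ∀ (k : ℕ) (T : List α), IsClosed s t T → T.Nodup → T.toFinset ⊆ F →
      F.card - T.length ≤ k →
      ∃ E : List α, IsClosed s t E ∧ E.Nodup ∧ E.toFinset = F := by
  intro k
  induction k with
  | zero =>
    intro T hclT hndT hsubT hcard
    refine ⟨T, hclT, hndT, ?_⟩
    apply Finset.eq_of_subset_of_card_le hsubT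
    rw [List.toFinset_card_of_nodup hndT]
    omega
  | succ k ih =>
    intro T hclT hndT hsubT hcard
    by_cases heq : T.toFinset = F
    · exact ⟨T, hclT, hndT, heq⟩
    -- find a vertex u on T with an unused out-edge
    have hTne : T.toFinset.Nonempty := by
      obtain ⟨x, hx⟩ := List.exists_mem_of_ne_nil T hclT.1
      exact ⟨x, List.mem_toFinset.mpr hx⟩
    obtain ⟨e, heF, heT, f, hfT, hcases⟩ := conn T.toFinset hsubT hTne heq
    have hfT' : f ∈ T := List.mem_toFinset.mp hfT
    -- produce u with (∃ f' ∈ T, s f' = u) and (s e = u ∨ t e = u)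
    obtain ⟨u, ⟨f', hf'T, hsf'⟩, hecase⟩ :
        ∃ u, (∃ f' ∈ T, s f' = u) ∧ (s e = u ∨ t e = u) := by
      rcases hcases with h | h | h | h
      · exact ⟨s f, ⟨f, hfT', rfl⟩, Or.inl h⟩
      · obtain ⟨f', hf', hsf'⟩ := isClosed_succ s t T hclT f hfT'
        exact ⟨t f, ⟨f', hf', hsf'⟩, Or.inl h⟩
      · exact ⟨s f, ⟨f, hfT', rfl⟩, Or.inr h⟩
      · obtain ⟨f', hf', hsf'⟩ := isClosed_succ s t T hclT f hfT'
        exact ⟨t f, ⟨f', hf', hsf'⟩, Or.inr h⟩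
    have hdbal := diff_bal s t F bal T hclT hndT hsubT
    -- unused out-edge e₁ at u
    obtain ⟨e₁, he₁⟩ : ∃ e₁, e₁ ∈ F \ T.toFinset ∧ s e₁ = u := by
      rcases hecase with h | h
      · exact ⟨e, Finset.mem_sdiff.mpr ⟨heF, heT⟩, h⟩
      · have h1 : 0 < ((F \ T.toFinset).filter fun x => t x = u).card := by
          apply Finset.card_pos.mpr
          exact ⟨e, Finset.mem_filter.mpr ⟨Finset.mem_sdiff.mpr ⟨heF, heT⟩, h⟩⟩
        rw [hdbal u] at h1
        obtain ⟨e₁, he₁⟩ := Finset.card_pos.mp h1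
        exact ⟨e₁, (Finset.mem_filter.mp he₁).1, (Finset.mem_filter.mp he₁).2⟩
    -- closed trail from u in F \ T.toFinset
    obtain ⟨Q, hQne, hQc, hQnd, hQsub, hQhead, hQlast⟩ :=
      extend_aux s t (F \ T.toFinset) hdbal u (F \ T.toFinset).card [e₁] (by simp)
        (List.isChain_singleton _) (List.nodup_singleton _)
        (by intro x hx; simp at hx; exact hx ▸ he₁.1) (by simpa using he₁.2) (by simp)
    -- splice
    obtain ⟨T₁, T₂, hTsplit⟩ := List.append_of_mem hf'T
    have hclRot : IsClosed s t ((f' :: T₂) ++ T₁) := by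
      apply isClosed_append_comm
      rw [← hTsplit]
      exact hclT
    set Trot := (f' :: T₂) ++ T₁ with hTrot
    have hTrotne : Trot ≠ [] := by simp [hTrot]
    have hQdisj : ∀ x ∈ Q, x ∉ T := by
      intro x hx hxT
      have := hQsub x hx
      rw [Finset.mem_sdiff] at this
      exact this.2 (List.mem_toFinset.mpr hxT)
    have hrotperm : Trot.Perm T := by
      rw [hTsplit, hTrot]
      exact (List.perm_append_comm).trans (List.Perm.refl _)
    have hndRot : Trot.Nodup := hrotperm.nodup_iff.mpr hndT
    have hE'c : (Q ++ Trot).Chain' (fun e f => t e = s f) := by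
      rw [List.Chain', List.isChain_append]
      refine ⟨hQc, hclRot.2.1, ?_⟩
      intro a ha b hb
      rw [List.getLast?_eq_getLast hQne] at ha
      simp at ha
      subst ha
      have hb' : b = f' := by
        rw [hTrot] at hb
        simp at hb
        exact hb.symm
      subst hb'
      rw [hQlast, ← hsf']
    have hE'cl : IsClosed s t (Q ++ Trot) := by
      refine ⟨by simp [hQne], hE'c, ?_⟩
      intro a ha b hb
      rw [List.getLast?_append] at ha
      rw [List.getLast?_eq_getLast hTrotne] at ha
      simp at ha
      subst ha
      rw [List.head?_append_of_ne_nil _ hQne, List.head?_eq_head hQne] at hb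
      simp at hb
      subst hb
      have := hclRot.2.2 (Trot.getLast hTrotne)
        (by rw [List.getLast?_eq_getLast hTrotne]; rfl) f' (by rw [hTrot]; rfl)
      rw [this, hsf', ← hQhead]
    have hE'nd : (Q ++ Trot).Nodup := by
      rw [List.nodup_append]
      refine ⟨hQnd, hndRot, ?_⟩
      intro x hx y hy hxy
      subst hxy
      exact hQdisj x hx (hrotperm.mem_iff.mp hy)
    have hE'sub : (Q ++ Trot).toFinset ⊆ F := by
      intro x hx
      rw [List.mem_toFinset, List.mem_append] at hx
      rcases hx with hx | hx
      · exact (Finset.mem_sdiff.mp (hQsub x hx)).1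
      · exact hsubT (List.mem_toFinset.mpr (hrotperm.mem_iff.mp hx))
    have hE'len : (Q ++ Trot).length = Q.length + T.length := by
      rw [List.length_append, hrotperm.length_eq]
    have hQpos : 0 < Q.length := List.length_pos_iff.mpr hQne
    have hcard' : F.card - (Q ++ Trot).length ≤ k := by
      rw [hE'len]; omega
    exact ih (Q ++ Trot) hE'cl hE'nd hE'sub hcard'

/-- Hierholzer's theorem. -/
lemma hierholzer (F : Finset α) (hne : F.Nonempty)
    (bal : ∀ x, (F.filter fun e => t e = x).card = (F.filter fun e => s e = x).card)
    (conn : ∀ T : Finset α, T ⊆ F → T.Nonempty → T ≠ F →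
      ∃ e ∈ F, e ∉ T ∧ ∃ f ∈ T, s e = s f ∨ s e = t f ∨ t e = s f ∨ t e = t f) :
    ∃ E : List α, IsClosed s t E ∧ E.Nodup ∧ E.toFinset = F := by
  obtain ⟨e₀, he₀⟩ := hne
  obtain ⟨Q, hQne, hQc, hQnd, hQsub, hQhead, hQlast⟩ :=
    extend_aux s t F bal (s e₀) F.card [e₀] (by simp)
      (List.isChain_singleton _) (List.nodup_singleton _)
      (by intro x hx; simp at hx; rwa [hx]) (by simp) (by simp)
  have hQcl : IsClosed s t Q := by
    refine ⟨hQne, hQc, ?_⟩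
    intro a ha b hb
    rw [List.getLast?_eq_getLast hQne] at ha
    rw [List.head?_eq_head hQne] at hb
    simp at ha hb
    subst ha; subst hb
    rw [hQlast, ← hQhead]
  exact main_aux s t F bal conn F.card Q hQcl hQnd
    (fun x hx => hQsub x (List.mem_toFinset.mp hx)) (by omega)


/-! ### The weak order word graph -/

/-- The finset of weak order words of length `n`. -/
def WOF (n : ℕ) : Finset (List ℕ) :=
  ((Fintype.piFinset fun _ : Fin n => Finset.range n).image fun f => List.ofFn f).filter
    fun w => ∃ h ∈ Finset.range n, w.toFinset = Finset.range (h + 1)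

lemma mem_WOF_iff {n : ℕ} {w : List ℕ} :
    w ∈ WOF n ↔ w.length = n ∧ ∃ h, h < n ∧ w.toFinset = Finset.range (h + 1) := by
  constructor
  · intro hw
    rw [WOF, Finset.mem_filter, Finset.mem_image] at hw
    obtain ⟨⟨f, _, rfl⟩, h, hh, htf⟩ := hw
    exact ⟨List.length_ofFn, h, Finset.mem_range.mp hh, htf⟩
  · rintro ⟨hlen, h, hh, htf⟩
    rw [WOF, Finset.mem_filter, Finset.mem_image]
    refine ⟨⟨fun i => w.get ⟨i, by omega⟩, ?_, ?_⟩, h, Finset.mem_range.mpr hh, htf⟩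
    · rw [Fintype.mem_piFinset]
      intro i
      rw [Finset.mem_range]
      have hmem : w.get ⟨i, by omega⟩ ∈ w.toFinset := List.mem_toFinset.mpr (w.get_mem _)
      rw [htf, Finset.mem_range] at hmem
      omega
    · apply List.ext_get (by simp [hlen])
      intro i h1 h2
      simp

lemma coe_WOF {n : ℕ} (hn : 0 < n) : (↑(WOF n) : Set (List ℕ)) = weakOrders n := by
  ext w
  simp only [Finset.coe_sort_coe, Finset.mem_coe, mem_WOF_iff, weakOrders, Set.mem_setOf_eq]
  constructor
  · rintro ⟨hlen, h, hh, htf⟩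
    exact ⟨hlen, h, htf⟩
  · rintro ⟨hlen, h, htf⟩
    refine ⟨hlen, h, ?_, htf⟩
    have h1 : w.toFinset.card ≤ w.length := w.toFinset_card_le
    rw [htf, Finset.card_range] at h1
    omega

lemma WOF_nonempty {n : ℕ} (hn : 0 < n) : (WOF n).Nonempty := by
  refine ⟨List.replicate n 0, mem_WOF_iff.mpr ⟨List.length_replicate, 0, hn, ?_⟩⟩
  ext a
  simp [List.mem_replicate]
  omega

lemma cons_mem_WOF_iff_append {n : ℕ} {v : List ℕ} {x : ℕ} :
    x :: v ∈ WOF n ↔ v ++ [x] ∈ WOF n := by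
  rw [mem_WOF_iff, mem_WOF_iff]
  have h1 : (x :: v).length = (v ++ [x]).length := by simp
  have h2 : (x :: v).toFinset = (v ++ [x]).toFinset := by
    rw [List.toFinset_cons, List.toFinset_append, List.toFinset_cons, List.toFinset_nil,
      Finset.union_comm]
    ext a; simp
  rw [h1, h2]

lemma WOF_balance (n : ℕ) (v : List ℕ) :
    ((WOF n).filter fun e => e.tail = v).card
      = ((WOF n).filter fun e => e.dropLast = v).card := by
  have hn' : ∀ w ∈ WOF n, w ≠ [] ∨ n = 0 := by
    intro w hw
    rcases Nat.eq_zero_or_pos n with h | h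
    · exact Or.inr h
    · left
      intro hnil
      have := (mem_WOF_iff.mp hw).1
      rw [hnil] at this
      simp at this
      omega
  rcases Nat.eq_zero_or_pos n with hn | hn
  · subst hn
    have : WOF 0 = ∅ := by
      rw [Finset.eq_empty_iff_forall_notMem]
      intro w hw
      obtain ⟨hlen, h, hh, _⟩ := mem_WOF_iff.mp hw
      omega
    simp [this]
  -- the set of letters that can be attached
  set S : Finset ℕ := (Finset.range n).filter (fun x => x :: v ∈ WOF n) with hS
  have h1 : (WOF n).filter (fun e => e.tail = v) = S.image (fun x => x :: v) := by
    ext w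
    rw [Finset.mem_filter, Finset.mem_image]
    constructor
    · rintro ⟨hw, htail⟩
      obtain ⟨hlen, h, hh, htf⟩ := mem_WOF_iff.mp hw
      have hne : w ≠ [] := by intro hnil; rw [hnil] at hlen; simp at hlen; omega
      have hw' : w = w.head hne :: v := by rw [← htail]; exact (List.cons_head_tail hne).symm
      have hx1 : w.head hne ∈ Finset.range n := by
        rw [Finset.mem_range]
        have hmem : w.head hne ∈ w.toFinset := List.mem_toFinset.mpr (List.head_mem hne)
        rw [htf, Finset.mem_range] at hmem
        omega
      have hx2 : w.head hne :: v ∈ WOF n := by rw [← hw']; exact hw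
      exact ⟨w.head hne, Finset.mem_filter.mpr ⟨hx1, hx2⟩, hw'.symm⟩
    · rintro ⟨x, hx, rfl⟩
      exact ⟨(Finset.mem_filter.mp hx).2, rfl⟩
  have h2 : (WOF n).filter (fun e => e.dropLast = v) = S.image (fun x => v ++ [x]) := by
    ext w
    rw [Finset.mem_filter, Finset.mem_image]
    constructor
    · rintro ⟨hw, hdrop⟩
      obtain ⟨hlen, h, hh, htf⟩ := mem_WOF_iff.mp hw
      have hne : w ≠ [] := by intro hnil; rw [hnil] at hlen; simp at hlen; omega
      have hw' : w = v ++ [w.getLast hne] := by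
        rw [← hdrop]; exact (List.dropLast_append_getLast hne).symm
      have hx1 : w.getLast hne ∈ Finset.range n := by
        rw [Finset.mem_range]
        have hmem : w.getLast hne ∈ w.toFinset := List.mem_toFinset.mpr (List.getLast_mem hne)
        rw [htf, Finset.mem_range] at hmem
        omega
      have hx2 : w.getLast hne :: v ∈ WOF n := by
        rw [cons_mem_WOF_iff_append, ← hw']; exact hw
      exact ⟨w.getLast hne, Finset.mem_filter.mpr ⟨hx1, hx2⟩, hw'.symm⟩
    · rintro ⟨x, hx, rfl⟩
      refine ⟨?_, List.dropLast_concat⟩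
      rw [← cons_mem_WOF_iff_append]
      exact (Finset.mem_filter.mp hx).2
  rw [h1, h2, Finset.card_image_of_injective _ (fun a b hab => by simpa using hab),
    Finset.card_image_of_injective _ (fun a b hab => by simpa using hab)]


/-! ### Reachability to the all-zeros vertex -/

/-- One edge step in the de Bruijn-style graph of weak order words. -/
def VRel (n : ℕ) (u w : List ℕ) : Prop := ∃ g ∈ WOF n, g.dropLast = u ∧ g.tail = w

/-- A vertex is valid if some letter can be prepended to give a weak order word. -/
def Valid (n : ℕ) (v : List ℕ) : Prop := ∃ x, x :: v ∈ WOF n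

/-- A finset of naturals is an initial segment. -/
def FullS (s : Finset ℕ) : Prop := ∃ h, s = Finset.range h

lemma fullS_of_between {s : Finset ℕ} {h : ℕ} (h1 : Finset.range h ⊆ s)
    (h2 : s ⊆ Finset.range (h + 1)) : FullS s := by
  by_cases hmem : h ∈ s
  · refine ⟨h + 1, Finset.Subset.antisymm h2 ?_⟩
    intro a ha
    rw [Finset.mem_range] at ha
    rcases Nat.lt_succ_iff_lt_or_eq.mp ha with ha | rfl
    · exact h1 (Finset.mem_range.mpr ha)
    · exact hmem
  · refine ⟨h, Finset.Subset.antisymm ?_ h1⟩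
    intro a ha
    rw [Finset.mem_range]
    have := h2 ha
    rw [Finset.mem_range] at this
    rcases Nat.lt_succ_iff_lt_or_eq.mp this with h' | rfl
    · exact h'
    · exact absurd ha hmem

lemma vrel_step {n : ℕ} {v : List ℕ} {y : ℕ} (hv : v ≠ []) (hg : v ++ [y] ∈ WOF n) :
    VRel n v (v.tail ++ [y]) := by
  refine ⟨v ++ [y], hg, List.dropLast_concat, ?_⟩
  cases v with
  | nil => exact absurd rfl hv
  | cons a l => rfl

lemma toFinset_concat (v : List ℕ) (x : ℕ) : (v ++ [x]).toFinset = insert x v.toFinset := by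
  rw [List.toFinset_append, List.toFinset_cons, List.toFinset_nil, Finset.union_comm]
  ext a; simp

/-- Phase A step: from a valid non-full vertex, one step keeps validity data and
either becomes full or moves the first occurrence of `h` closer to the front. -/
lemma phaseA_step (n : ℕ) (v : List ℕ) (x h : ℕ) (hlen : v.length + 1 = n) (hh : h < n)
    (htf : insert x v.toFinset = Finset.range (h + 1)) (hfull : ¬ FullS v.toFinset) :
    ∃ v' x', VRel n v v' ∧ v'.length + 1 = n ∧
      insert x' v'.toFinset = Finset.range (h + 1) ∧
      (FullS v'.toFinset ∨ v'.idxOf h < v.idxOf h) := by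
  have hxv : x ∉ v.toFinset := by
    intro hc
    exact hfull ⟨h + 1, by rw [← htf, Finset.insert_eq_self.mpr hc]⟩
  have hsub2 : ∀ a, a < h + 1 → a ≠ x → a ∈ v.toFinset := by
    intro a ha hax
    have : a ∈ insert x v.toFinset := by rw [htf]; exact Finset.mem_range.mpr ha
    rcases Finset.mem_insert.mp this with rfl | h'
    · exact absurd rfl hax
    · exact h'
  have hxh : x ≠ h := by
    rintro rfl
    apply hfull
    refine ⟨x, Finset.Subset.antisymm ?_ ?_⟩
    · intro a ha
      rw [Finset.mem_range]
      have h2 : a ∈ insert x v.toFinset := Finset.mem_insert_of_mem ha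
      rw [htf, Finset.mem_range] at h2
      rcases Nat.lt_succ_iff_lt_or_eq.mp h2 with h' | rfl
      · exact h'
      · exact absurd ha hxv
    · intro a ha
      rw [Finset.mem_range] at ha
      exact hsub2 a (by omega) (by omega)
  have hhv : h ∈ v.toFinset := hsub2 h (by omega) (Ne.symm hxh)
  have hvne : v ≠ [] := by
    intro hc; rw [hc] at hhv; simp at hhv
  have hvlenpos : 0 < v.length := List.length_pos_iff.mpr hvne
  have hg : v ++ [x] ∈ WOF n :=
    mem_WOF_iff.mpr ⟨by simp; omega, h, hh, by rw [toFinset_concat]; exact htf⟩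
  have hstep : VRel n v (v.tail ++ [x]) := vrel_step hvne hg
  have hlen' : (v.tail ++ [x]).length + 1 = n := by
    simp [List.length_tail]
    omega
  have hv'tf : (v.tail ++ [x]).toFinset = insert x v.tail.toFinset := toFinset_concat _ _
  have hkey : insert (v.head hvne) (v.tail ++ [x]).toFinset = Finset.range (h + 1) := by
    rw [hv'tf, Finset.insert_comm]
    have : insert (v.head hvne) v.tail.toFinset = v.toFinset := by
      conv_rhs => rw [← List.cons_head_tail hvne]
      rw [List.toFinset_cons]
    rw [this, htf]
  refine ⟨v.tail ++ [x], v.head hvne, hstep, hlen', hkey, ?_⟩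
  by_cases hhead : v.head hvne = h
  · left
    apply fullS_of_between (h := h)
    · intro a ha
      rw [Finset.mem_range] at ha
      have h2 : a ∈ insert (v.head hvne) (v.tail ++ [x]).toFinset := by
        rw [hkey]; exact Finset.mem_range.mpr (by omega)
      rcases Finset.mem_insert.mp h2 with rfl | h3
      · omega
      · exact h3
    · rw [← hkey]
      exact Finset.subset_insert _ _
  · right
    have hhtail : h ∈ v.tail := by
      have hhv' : h ∈ v := List.mem_toFinset.mp hhv
      conv at hhv' => rw [← List.cons_head_tail hvne]
      rcases List.mem_cons.mp hhv' with h' | h'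
      · exact absurd h'.symm hhead
      · exact h'
    have h1 : (v.tail ++ [x]).idxOf h = v.tail.idxOf h :=
      List.idxOf_append_of_mem hhtail
    have h2 : v.idxOf h = v.tail.idxOf h + 1 := by
      conv_lhs => rw [← List.cons_head_tail hvne]
      exact List.idxOf_cons_ne _ hhead
    omega

/-- Phase A: a valid vertex reaches a valid vertex with initial-segment letters. -/
lemma phaseA (n : ℕ) : ∀ (k : ℕ) (v : List ℕ) (x h : ℕ), v.length + 1 = n → h < n →
    insert x v.toFinset = Finset.range (h + 1) → v.idxOf h ≤ k →
    ∃ w, Relation.ReflTransGen (VRel n) v w ∧ Valid n w ∧ FullS w.toFinset := by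
  intro k
  induction k with
  | zero =>
    intro v x h hlen hh htf hidx
    by_cases hfull : FullS v.toFinset
    · exact ⟨v, Relation.ReflTransGen.refl,
        ⟨x, mem_WOF_iff.mpr ⟨by simpa using hlen, h, hh, by rw [List.toFinset_cons, htf]⟩⟩, hfull⟩
    · obtain ⟨v', x', hstep, hlen', htf', hdich⟩ := phaseA_step n v x h hlen hh htf hfull
      rcases hdich with hfull' | hlt
      · exact ⟨v', Relation.ReflTransGen.single hstep,
          ⟨x', mem_WOF_iff.mpr ⟨by simpa using hlen', h, hh,
            by rw [List.toFinset_cons, htf']⟩⟩, hfull'⟩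
      · omega
  | succ k ih =>
    intro v x h hlen hh htf hidx
    by_cases hfull : FullS v.toFinset
    · exact ⟨v, Relation.ReflTransGen.refl,
        ⟨x, mem_WOF_iff.mpr ⟨by simpa using hlen, h, hh, by rw [List.toFinset_cons, htf]⟩⟩, hfull⟩
    · obtain ⟨v', x', hstep, hlen', htf', hdich⟩ := phaseA_step n v x h hlen hh htf hfull
      rcases hdich with hfull' | hlt
      · exact ⟨v', Relation.ReflTransGen.single hstep,
          ⟨x', mem_WOF_iff.mpr ⟨by simpa using hlen', h, hh,
            by rw [List.toFinset_cons, htf']⟩⟩, hfull'⟩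
      · obtain ⟨w, hw1, hw2, hw3⟩ := ih v' x' h hlen' hh htf' (by omega)
        exact ⟨w, Relation.ReflTransGen.head hstep hw1, hw2, hw3⟩


/-- Dropping the maximum from the front of a full vertex and appending `0`. -/
lemma phaseB_drop (n : ℕ) (v : List ℕ) (h : ℕ) (hlen : v.length + 1 = n) (hh : h < n)
    (h1 : 1 ≤ h) (htf : v.toFinset = Finset.range (h + 1)) (hvne : v ≠ [])
    (hhead : v.head hvne = h) :
    ∃ w : List ℕ, Relation.ReflTransGen (VRel n) v w ∧ w.length + 1 = n ∧
      Valid n w ∧ FullS w.toFinset ∧ w.sum < v.sum := by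
  have hvlenpos : 0 < v.length := List.length_pos_iff.mpr hvne
  have h0tf : (0 : ℕ) ∈ v.toFinset := by rw [htf]; exact Finset.mem_range.mpr (by omega)
  have hg : v ++ [0] ∈ WOF n := by
    refine mem_WOF_iff.mpr ⟨by simp; omega, h, hh, ?_⟩
    rw [toFinset_concat, Finset.insert_eq_self.mpr h0tf, htf]
  have hstep : VRel n v (v.tail ++ [0]) := vrel_step hvne hg
  have hlen' : (v.tail ++ [0]).length + 1 = n := by simp [List.length_tail]; omega
  have hvcons : v.head hvne :: v.tail = v := List.cons_head_tail hvne
  have htails : v.tail.toFinset ⊆ v.toFinset := by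
    intro a ha
    rw [← hvcons, List.toFinset_cons]
    exact Finset.mem_insert_of_mem ha
  have hwtf : (v.tail ++ [0]).toFinset = insert 0 v.tail.toFinset := toFinset_concat _ _
  have hup : (v.tail ++ [0]).toFinset ⊆ Finset.range (h + 1) := by
    rw [hwtf]
    intro a ha
    rcases Finset.mem_insert.mp ha with rfl | ha
    · exact Finset.mem_range.mpr (by omega)
    · rw [← htf]; exact htails ha
  have hlow : Finset.range h ⊆ (v.tail ++ [0]).toFinset := by
    intro a ha
    rw [Finset.mem_range] at ha
    have h2 : a ∈ v.toFinset := by rw [htf]; exact Finset.mem_range.mpr (by omega)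
    rw [← hvcons, List.toFinset_cons] at h2
    rcases Finset.mem_insert.mp h2 with rfl | h3
    · omega
    · rw [hwtf]; exact Finset.mem_insert_of_mem h3
  have hfull' : FullS (v.tail ++ [0]).toFinset := fullS_of_between hlow hup
  have hvalid' : Valid n (v.tail ++ [0]) := by
    refine ⟨h, mem_WOF_iff.mpr ⟨by simp [List.length_tail]; omega, h, hh, ?_⟩⟩
    rw [List.toFinset_cons, hwtf]
    rw [Finset.insert_comm]
    have : insert h v.tail.toFinset = v.toFinset := by
      conv_rhs => rw [← hvcons]
      rw [List.toFinset_cons, hhead]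
    rw [this, htf, Finset.insert_eq_self.mpr (Finset.mem_range.mpr (by omega))]
  have hsum : (v.tail ++ [0]).sum < v.sum := by
    rw [List.sum_append]
    conv_rhs => rw [← hvcons]
    rw [List.sum_cons, hhead]
    simp
    omega
  exact ⟨v.tail ++ [0], Relation.ReflTransGen.single hstep, hlen', hvalid', hfull', hsum⟩

/-- Phase B rotation step: from a full vertex with positive max, reach a full
valid vertex with strictly smaller letter sum. -/
lemma phaseB_rot (n : ℕ) : ∀ (k : ℕ) (v : List ℕ) (h : ℕ), v.length + 1 = n → h < n →
    1 ≤ h → v.toFinset = Finset.range (h + 1) → v.idxOf h ≤ k →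
    ∃ w : List ℕ, Relation.ReflTransGen (VRel n) v w ∧ w.length + 1 = n ∧
      Valid n w ∧ FullS w.toFinset ∧ w.sum < v.sum := by
  intro k
  induction k with
  | zero =>
    intro v h hlen hh h1 htf hidx
    have hhv : h ∈ v.toFinset := by rw [htf]; exact Finset.mem_range.mpr (by omega)
    have hvne : v ≠ [] := by intro hc; rw [hc] at hhv; simp at hhv
    have hhead : v.head hvne = h := by
      by_contra hne
      have h2 : v.idxOf h = v.tail.idxOf h + 1 := by
        conv_lhs => rw [← List.cons_head_tail hvne]
        exact List.idxOf_cons_ne _ hne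
      omega
    exact phaseB_drop n v h hlen hh h1 htf hvne hhead
  | succ k ih =>
    intro v h hlen hh h1 htf hidx
    have hhv : h ∈ v.toFinset := by rw [htf]; exact Finset.mem_range.mpr (by omega)
    have hvne : v ≠ [] := by intro hc; rw [hc] at hhv; simp at hhv
    by_cases hhead : v.head hvne = h
    · exact phaseB_drop n v h hlen hh h1 htf hvne hhead
    · -- rotate
      have hg : v ++ [v.head hvne] ∈ WOF n := by
        refine mem_WOF_iff.mpr ⟨by simp; omega, h, hh, ?_⟩
        rw [toFinset_concat, Finset.insert_eq_self.mpr
          (List.mem_toFinset.mpr (List.head_mem hvne)), htf]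
      have hstep : VRel n v (v.tail ++ [v.head hvne]) := vrel_step hvne hg
      have hvlenpos : 0 < v.length := List.length_pos_iff.mpr hvne
      have hlen' : (v.tail ++ [v.head hvne]).length + 1 = n := by
        simp [List.length_tail]; omega
      have htf' : (v.tail ++ [v.head hvne]).toFinset = Finset.range (h + 1) := by
        rw [toFinset_concat]
        have : insert (v.head hvne) v.tail.toFinset = v.toFinset := by
          conv_rhs => rw [← List.cons_head_tail hvne]
          rw [List.toFinset_cons]
        rw [this, htf]
      have hhtail : h ∈ v.tail := by
        have hhv' : h ∈ v := List.mem_toFinset.mp hhv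
        conv at hhv' => rw [← List.cons_head_tail hvne]
        rcases List.mem_cons.mp hhv' with h' | h'
        · exact absurd h'.symm hhead
        · exact h'
      have hidx' : (v.tail ++ [v.head hvne]).idxOf h ≤ k := by
        rw [List.idxOf_append_of_mem hhtail]
        have h2 : v.idxOf h = v.tail.idxOf h + 1 := by
          conv_lhs => rw [← List.cons_head_tail hvne]
          exact List.idxOf_cons_ne _ hhead
        omega
      have hsum' : (v.tail ++ [v.head hvne]).sum = v.sum := by
        have h3 : v.sum = v.head hvne + v.tail.sum := by
          conv_lhs => rw [← List.cons_head_tail hvne]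
          rw [List.sum_cons]
        rw [List.sum_append, h3]
        simp
        omega
      obtain ⟨w, hw1, hw2, hw3, hw4, hw5⟩ := ih _ h hlen' hh h1 htf' hidx'
      exact ⟨w, Relation.ReflTransGen.head hstep hw1, hw2, hw3, hw4, by omega⟩


lemma phaseB_zero (n : ℕ) (v : List ℕ) (hv : Valid n v) (hs : v.sum = 0) :
    v = List.replicate (n - 1) 0 := by
  obtain ⟨x, hx⟩ := hv
  have hlen : v.length + 1 = n := by
    have := (mem_WOF_iff.mp hx).1
    simpa using this
  rw [List.eq_replicate_iff]
  exact ⟨by omega, List.sum_eq_zero_iff.mp hs⟩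

lemma phaseB (n : ℕ) : ∀ (σ : ℕ) (v : List ℕ), Valid n v → FullS v.toFinset → v.sum ≤ σ →
    Relation.ReflTransGen (VRel n) v (List.replicate (n - 1) 0) := by
  intro σ
  induction σ with
  | zero =>
    intro v hv _ hs
    rw [phaseB_zero n v hv (by omega)]
  | succ σ ih =>
    intro v hv hfull hs
    by_cases hs0 : v.sum = 0
    · rw [phaseB_zero n v hv hs0]
    · obtain ⟨x, hx⟩ := hv
      obtain ⟨hxlen, hh2, hh2n, htf2⟩ := mem_WOF_iff.mp hx
      have hlen : v.length + 1 = n := by simpa using hxlen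
      have hvne : v ≠ [] := by
        intro hc; rw [hc] at hs0; simp at hs0
      obtain ⟨h', htf'⟩ := hfull
      have h'pos : 0 < h' := by
        rcases Nat.eq_zero_or_pos h' with rfl | h
        · rw [Finset.range_zero] at htf'
          have := List.toFinset_eq_empty_iff v |>.mp htf'
          exact absurd this hvne
        · exact h
      obtain ⟨h, rfl⟩ : ∃ h, h' = h + 1 := ⟨h' - 1, by omega⟩
      have h1 : 1 ≤ h := by
        by_contra hc
        have hall : ∀ a ∈ v, a = 0 := by
          intro a ha
          have : a ∈ v.toFinset := List.mem_toFinset.mpr ha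
          rw [htf', Finset.mem_range] at this
          omega
        exact hs0 (List.sum_eq_zero_iff.mpr hall)
      have hhn : h < n := by
        have hmem : h ∈ v.toFinset := by rw [htf']; exact Finset.mem_range.mpr (by omega)
        have hmem2 : h ∈ (x :: v).toFinset := by
          rw [List.toFinset_cons]; exact Finset.mem_insert_of_mem hmem
        rw [htf2, Finset.mem_range] at hmem2
        omega
      obtain ⟨w, hw1, hw2, hw3, hw4, hw5⟩ :=
        phaseB_rot n (v.idxOf h) v h hlen hhn h1 htf' (le_refl _)
      exact hw1.trans (ih w hw3 hw4 (by omega))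

lemma valid_reach_z (n : ℕ) (v : List ℕ) (hv : Valid n v) :
    Relation.ReflTransGen (VRel n) v (List.replicate (n - 1) 0) := by
  obtain ⟨x, hx⟩ := hv
  obtain ⟨hlen, h, hh, htf⟩ := mem_WOF_iff.mp hx
  rw [List.toFinset_cons] at htf
  have hlen' : v.length + 1 = n := by simpa using hlen
  obtain ⟨w, hw1, hw2, hw3⟩ := phaseA n (v.idxOf h) v x h hlen' hh htf (le_refl _)
  exact hw1.trans (phaseB n w.sum w hw2 hw3 (le_refl _))


lemma WOF_reverse {n : ℕ} {w : List ℕ} (hw : w ∈ WOF n) : w.reverse ∈ WOF n := by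
  obtain ⟨hlen, h, hh, htf⟩ := mem_WOF_iff.mp hw
  exact mem_WOF_iff.mpr ⟨by simpa using hlen, h, hh, by rwa [List.toFinset_reverse]⟩

lemma vrel_reverse {n : ℕ} {u w : List ℕ} (h : VRel n u w) : VRel n w.reverse u.reverse := by
  obtain ⟨g, hg, hgd, hgt⟩ := h
  refine ⟨g.reverse, WOF_reverse hg, ?_, ?_⟩
  · rw [List.dropLast_reverse, hgt]
  · rw [List.tail_reverse, hgd]

lemma reach_reverse {n : ℕ} {u w : List ℕ} (h : Relation.ReflTransGen (VRel n) u w) :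
    Relation.ReflTransGen (VRel n) w.reverse u.reverse := by
  induction h with
  | refl => exact Relation.ReflTransGen.refl
  | tail _ h2 ih => exact Relation.ReflTransGen.head (vrel_reverse h2) ih

lemma tail_valid {n : ℕ} {w : List ℕ} (hw : w ∈ WOF n) : Valid n w.tail := by
  obtain ⟨hlen, h, hh, _⟩ := mem_WOF_iff.mp hw
  have hne : w ≠ [] := by
    intro hc; rw [hc] at hlen; simp at hlen; omega
  exact ⟨w.head hne, by rw [List.cons_head_tail]; exact hw⟩

lemma touch_of_reach (n : ℕ) (T : Finset (List ℕ)) (w : List ℕ)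
    (hw : ∃ e ∈ WOF n, e ∉ T ∧ e.dropLast = w) :
    ∀ u, Relation.ReflTransGen (VRel n) u w → (∃ f ∈ T, f.tail = u) →
    ∃ e ∈ WOF n, e ∉ T ∧ ∃ f ∈ T,
      (e.dropLast = f.dropLast ∨ e.dropLast = f.tail ∨ e.tail = f.dropLast ∨ e.tail = f.tail) := by
  intro u h
  induction h using Relation.ReflTransGen.head_induction_on with
  | refl =>
    rintro ⟨f, hfT, hft⟩
    obtain ⟨e, heW, heT, hed⟩ := hw
    exact ⟨e, heW, heT, f, hfT, Or.inr (Or.inl (hed.trans hft.symm))⟩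
  | head hac hcb ih =>
    rintro ⟨f, hfT, hft⟩
    obtain ⟨g, hgW, hgd, hgt⟩ := hac
    by_cases hgT : g ∈ T
    · exact ih ⟨g, hgT, hgt⟩
    · exact ⟨g, hgW, hgT, f, hfT, Or.inr (Or.inl (hgd.trans hft.symm))⟩

lemma WOF_conn (n : ℕ) : ∀ T : Finset (List ℕ), T ⊆ WOF n → T.Nonempty → T ≠ WOF n →
    ∃ e ∈ WOF n, e ∉ T ∧ ∃ f ∈ T,
      (e.dropLast = f.dropLast ∨ e.dropLast = f.tail ∨ e.tail = f.dropLast ∨ e.tail = f.tail) := by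
  intro T hsub hne hneq
  obtain ⟨f0, hf0⟩ := hne
  obtain ⟨e0, he0W, he0T⟩ :=
    Finset.exists_of_ssubset (Finset.ssubset_iff_subset_ne.mpr ⟨hsub, hneq⟩)
  have h1 : Relation.ReflTransGen (VRel n) f0.tail (List.replicate (n - 1) 0) :=
    valid_reach_z n _ (tail_valid (hsub hf0))
  have h2 : Relation.ReflTransGen (VRel n) (List.replicate (n - 1) 0) e0.dropLast := by
    have h3 : Relation.ReflTransGen (VRel n) e0.reverse.tail (List.replicate (n - 1) 0) :=
      valid_reach_z n _ (tail_valid (WOF_reverse he0W))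
    have h4 := reach_reverse h3
    rw [List.reverse_replicate, List.tail_reverse, List.reverse_reverse] at h4
    exact h4
  exact touch_of_reach n T e0.dropLast ⟨e0, he0W, he0T, rfl⟩ f0.tail (h1.trans h2)
    ⟨f0, hf0, rfl⟩

end UCWO

/-- `IsUCycle m N C a` says the cyclic sequence `a₀ a₁ … a_{N-1}` is a universal
cycle for the set `C` of strings of length `m`: every cyclic window
`a_i a_{i+1} ⋯ a_{i+m-1}` (indices mod `N`) lies in `C`, and every element of `C`
arises from exactly one of the `N` cyclic windows. -/
def IsUCycle (m N : ℕ) (C : Set (List ℕ)) (a : ℕ → ℕ) : Prop :=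
  (∀ i < N, (List.ofFn fun j : Fin m => a ((i + j.val) % N)) ∈ C) ∧
    ∀ c ∈ C, ∃! i, i < N ∧ (List.ofFn fun j : Fin m => a ((i + j.val) % N)) = c

/-- For every positive integer `n`, there exists a universal cycle for `W(n)`,
of length `N = |W(n)|`. -/
theorem exists_ucycle_weakOrders (n : ℕ) (hn : 0 < n) :
    ∃ a : ℕ → ℕ, IsUCycle n (Nat.card (weakOrders n)) (weakOrders n) a := by
  classical
  obtain ⟨E, hcl, hnd, htfE⟩ := UCWO.hierholzer (fun w => w.dropLast) (fun w => w.tail)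
    (UCWO.WOF n) (UCWO.WOF_nonempty hn) (fun v => UCWO.WOF_balance n v) (UCWO.WOF_conn n)
  obtain ⟨hEne, hchain, hclosed⟩ := hcl
  set N := E.length with hN
  have hNpos : 0 < N := List.length_pos_iff.mpr hEne
  have hNN : Nat.card (weakOrders n) = N := by
    rw [← UCWO.coe_WOF hn, Nat.card_coe_set_eq, Set.ncard_coe_finset, ← htfE,
      List.toFinset_card_of_nodup hnd]
  have hmemE : ∀ (i : ℕ) (h : i < N), E[i] ∈ UCWO.WOF n := by
    intro i h
    rw [← htfE, List.mem_toFinset]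
    exact List.getElem_mem h
  have key : ∀ (a b : ℕ), a = b → ∀ (ha : a < E.length) (hb : b < E.length),
      E[a] = E[b] := by
    intro a b hab ha hb; subst hab; rfl
  -- the cyclic sequence of edges
  set W : ℕ → List ℕ := fun i => E.getD (i % N) [] with hW
  have hWE : ∀ i : ℕ, W i = E[i % N]'(Nat.mod_lt _ hNpos) := by
    intro i
    exact List.getD_eq_getElem E [] (Nat.mod_lt _ hNpos)
  have hWmem : ∀ i, W i ∈ UCWO.WOF n := by
    intro i; rw [hWE]; exact hmemE _ _
  have hWlen : ∀ i, (W i).length = n := fun i => (UCWO.mem_WOF_iff.mp (hWmem i)).1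
  have hWper : ∀ i, W (i % N) = W i := by
    intro i
    simp only [hW, Nat.mod_mod_of_dvd _ dvd_rfl]
  -- adjacency of consecutive windows
  have hadj : ∀ i : ℕ, (W i).tail = (W (i + 1)).dropLast := by
    intro i
    have hmod : (i + 1) % N = (i % N + 1) % N := by
      conv_lhs => rw [Nat.add_mod]
      conv_rhs => rw [Nat.add_mod, Nat.mod_mod_of_dvd _ dvd_rfl]
    set j := i % N with hj
    have hjN : j < N := Nat.mod_lt _ hNpos
    rw [← hWper i, ← hWper (i+1), hmod]
    by_cases h2 : j + 1 < N
    · have hc := List.isChain_iff_getElem.mp hchain j (by omega)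
      simp only [List.get_eq_getElem] at hc
      rw [hWE, hWE]
      have hmod2 : (j + 1) % N % N = j + 1 := by
        rw [Nat.mod_mod_of_dvd _ dvd_rfl, Nat.mod_eq_of_lt h2]
      have hmod3 : j % N = j := Nat.mod_eq_of_lt hjN
      rw [key (j % N) j hmod3 _ (by omega), key ((j+1) % N % N) (j+1) hmod2 _ (by omega)]
      exact hc
    · have hj1 : j + 1 = N := by omega
      have hmod2 : (j + 1) % N % N = 0 := by rw [hj1, Nat.mod_self, Nat.zero_mod]
      have hmod3 : j % N = j := Nat.mod_eq_of_lt hjN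
      rw [hWE, hWE]
      rw [key (j % N) j hmod3 _ (by omega), key ((j+1) % N % N) 0 hmod2 _ (by omega)]
      have hlast := hclosed (E.getLast hEne) (by rw [List.getLast?_eq_getLast hEne]; rfl)
        (E.head hEne) (by rw [List.head?_eq_head hEne]; rfl)
      rw [List.getLast_eq_getElem, List.head_eq_getElem_zero] at hlast
      rw [key j (E.length - 1) (by omega) (by omega) (by omega)]
      exact hlast
  -- entries of the windows
  have hWne : ∀ i, W i ≠ [] := by
    intro i hc
    have := hWlen i
    rw [hc] at this
    simp at this
    omega
  have hentry : ∀ (j : ℕ), j < n → ∀ i : ℕ, (W (i + j)).headI = (W i).getD j 0 := by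
    intro j
    induction j with
    | zero =>
      intro _ i
      rw [Nat.add_zero]
      rcases hne : W i with _ | ⟨a, l⟩
      · exact absurd hne (hWne i)
      · rfl
    | succ j ihj =>
      intro hjn i
      have e1 : i + (j + 1) = (i + 1) + j := by omega
      rw [e1, ihj (by omega) (i + 1)]
      have hlen1 : (W (i + 1)).length = n := hWlen (i + 1)
      have hlen0 : (W i).length = n := hWlen i
      have hd1 : j < (W (i+1)).dropLast.length := by
        rw [List.length_dropLast, hlen1]; omega
      have ht1 : j < (W i).tail.length := by
        rw [List.length_tail, hlen0]; omega
      have b1 : (W (i+1)).dropLast.getD j 0 = (W (i+1)).getD j 0 := by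
        rw [List.getD_eq_getElem _ _ hd1, List.getD_eq_getElem _ _ (by omega : j < (W (i+1)).length),
          List.getElem_dropLast]
      have b2 : (W i).tail.getD j 0 = (W i).getD (j+1) 0 := by
        rw [List.getD_eq_getElem _ _ ht1,
          List.getD_eq_getElem _ _ (by omega : j + 1 < (W i).length), List.getElem_tail]
      have b3 : (W i).tail.getD j 0 = (W (i+1)).dropLast.getD j 0 :=
        congrArg (fun l => l.getD j 0) (hadj i)
      rw [← b1, ← b3, b2]
  -- the universal cycle
  refine ⟨fun i => (W i).headI, ?_⟩
  rw [hNN, ← UCWO.coe_WOF hn]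
  have hwin : ∀ i : ℕ, (List.ofFn fun j : Fin n => (W ((i + j.val) % N)).headI) = W i := by
    intro i
    apply List.ext_getElem (by simp [hWlen i])
    intro j h1 h2
    rw [List.getElem_ofFn]
    simp only
    rw [hWper (i + j), hentry j (by simpa using h1) i,
      List.getD_eq_getElem _ _ (by rw [hWlen i]; simpa using h1)]
  constructor
  · intro i _
    rw [hwin i]
    exact Finset.mem_coe.mpr (hWmem i)
  · intro c hc
    have hcE : c ∈ E := by
      rw [← List.mem_toFinset, htfE]
      exact Finset.mem_coe.mp hc
    obtain ⟨j, hj, hjc⟩ := List.getElem_of_mem hcE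
    have hinj : Function.Injective E.get := List.nodup_iff_injective_get.mp hnd
    refine ⟨j, ⟨hj, ?_⟩, ?_⟩
    · rw [hwin j, hWE, key (j % N) j (Nat.mod_eq_of_lt hj) _ hj]
      exact hjc
    · rintro y ⟨hy, hyc⟩
      rw [hwin y] at hyc
      have h1 : W y = W j := by
        rw [hyc, hWE, key (j % N) j (Nat.mod_eq_of_lt hj) _ hj]
        exact hjc.symm
      rw [hWE, hWE] at h1
      have h2 : E.get ⟨y % N, Nat.mod_lt _ hNpos⟩ = E.get ⟨j % N, Nat.mod_lt _ hNpos⟩ := by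
        simpa using h1
      have h3 := hinj h2
      have h4 : y % N = j % N := by
        exact congrArg Fin.val h3
      rw [Nat.mod_eq_of_lt hy, Nat.mod_eq_of_lt hj] at h4
      exact h4
end

section
/- For all positive integers n and k with k ≤ n(n−1)/2, there exists a universal cycle for W_k⁻(n), the set of prefixes of weight-k weak order words of length n (a set of strings of length n−1 whose cardinality equals |W_k(n)|). -/
/-- `W_k(n)`: the weak order words of length `n` with weight (sum of letters) `k`. -/
def weightWeakOrders (n k : ℕ) : Set (List ℕ) :=
  {w ∈ weakOrders n | w.sum = k}

set_option linter.unusedSectionVars false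
set_option linter.unusedVariables false

namespace UCAux
open Relation

def Mid (l : List ℕ) : List ℕ := l.dropLast.drop 1
def Pre (l : List ℕ) : List ℕ := l.dropLast.dropLast

def SS (n k : ℕ) (l l' : List ℕ) : Prop :=
  l ∈ weightWeakOrders n k ∧ l' ∈ weightWeakOrders n k ∧
    (l' = l.rotate 1 ∨ Mid l = Mid l')

def Conn (n k : ℕ) : List ℕ → List ℕ → Prop := EqvGen (SS n k)

variable {n k : ℕ}

lemma mem_of_perm {l l' : List ℕ} (h : l ∈ weightWeakOrders n k) (hp : l.Perm l') :
    l' ∈ weightWeakOrders n k := by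
  obtain ⟨⟨hlen, hh, hfin⟩, hsum⟩ := h
  exact ⟨⟨hp.length_eq ▸ hlen, hh, (List.toFinset_eq_of_perm _ _ hp) ▸ hfin⟩, hp.sum_eq ▸ hsum⟩

lemma rotate_mem {l : List ℕ} (h : l ∈ weightWeakOrders n k) (j : ℕ) :
    l.rotate j ∈ weightWeakOrders n k := mem_of_perm h (List.rotate_perm l j).symm

lemma conn_rotate {l : List ℕ} (h : l ∈ weightWeakOrders n k) (j : ℕ) :
    Conn n k l (l.rotate j) := by
  induction j with
  | zero => rw [List.rotate_zero]; exact EqvGen.refl l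
  | succ j ih =>
      refine EqvGen.trans _ _ _ ih (EqvGen.rel _ _ ?_)
      exact ⟨rotate_mem h j, rotate_mem h (j+1), Or.inl (List.rotate_rotate l j 1).symm⟩

lemma conn_symm {l l' : List ℕ} (h : Conn n k l l') : Conn n k l' l := EqvGen.symm _ _ h
lemma conn_trans {a b c : List ℕ} (h : Conn n k a b) (h' : Conn n k b c) : Conn n k a c :=
  EqvGen.trans _ _ _ h h'

lemma conn_rot_to {A B : List ℕ} (h : A ++ B ∈ weightWeakOrders n k) :
    Conn n k (A ++ B) (B ++ A) := by
  have hrot : (A ++ B).rotate A.length = B ++ A := by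
    rw [List.rotate_eq_drop_append_take (by simp), List.drop_left, List.take_left]
  simpa [hrot] using conn_rotate h A.length

lemma mid_cons_concat (a b : ℕ) (M : List ℕ) : Mid (a :: M ++ [b]) = M := by
  have e : a :: M ++ [b] = (a :: M) ++ [b] := by simp
  rw [Mid, e, List.dropLast_concat]; rfl

lemma perm_swapEnd (a b : ℕ) (M : List ℕ) : (a :: M ++ [b]).Perm (b :: M ++ [a]) := by
  have h1 : (a :: (M ++ [b])).Perm (a :: (b :: M)) :=
    List.Perm.cons a (List.perm_append_singleton b M)
  have h2 : (a :: b :: M).Perm (b :: a :: M) := List.Perm.swap b a M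
  have h3 : (b :: (a :: M)).Perm (b :: (M ++ [a])) :=
    List.Perm.cons b (List.perm_append_singleton a M).symm
  exact (h1.trans h2).trans h3

lemma ss_swapEnd {a b : ℕ} {M : List ℕ} (h : a :: M ++ [b] ∈ weightWeakOrders n k) :
    SS n k (a :: M ++ [b]) (b :: M ++ [a]) :=
  ⟨h, mem_of_perm h (perm_swapEnd a b M), Or.inr (by rw [mid_cons_concat, mid_cons_concat])⟩

lemma conn_swapAdj {A B : List ℕ} {a b : ℕ} (h : A ++ a :: b :: B ∈ weightWeakOrders n k) :
    Conn n k (A ++ a :: b :: B) (A ++ b :: a :: B) := by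
  have e1 : A ++ a :: b :: B = (A ++ [a]) ++ (b :: B) := by simp
  have c1 : Conn n k (A ++ a :: b :: B) ((b :: B) ++ (A ++ [a])) := by
    rw [e1]; exact conn_rot_to (e1 ▸ h)
  have e2 : (b :: B) ++ (A ++ [a]) = b :: (B ++ A) ++ [a] := by simp
  have hmem2 : b :: (B ++ A) ++ [a] ∈ weightWeakOrders n k := by
    rw [← e2]
    exact mem_of_perm h (e1 ▸ List.perm_append_comm)
  have c2 : Conn n k (b :: (B ++ A) ++ [a]) (a :: (B ++ A) ++ [b]) :=
    EqvGen.rel _ _ (ss_swapEnd hmem2)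
  have hmem3 : a :: (B ++ A) ++ [b] ∈ weightWeakOrders n k := (ss_swapEnd hmem2).2.1
  have e3 : a :: (B ++ A) ++ [b] = (a :: B) ++ (A ++ [b]) := by simp
  have c3 : Conn n k (a :: (B ++ A) ++ [b]) ((A ++ [b]) ++ (a :: B)) := by
    rw [e3]; exact conn_rot_to (e3 ▸ hmem3)
  have e4 : (A ++ [b]) ++ (a :: B) = A ++ b :: a :: B := by simp
  rw [e2] at c1
  exact conn_trans c1 (conn_trans c2 (e4 ▸ c3))

lemma conn_of_perm_aux {B B' : List ℕ} (hp : B.Perm B') :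
    ∀ A : List ℕ, A ++ B ∈ weightWeakOrders n k → Conn n k (A ++ B) (A ++ B') := by
  induction hp with
  | nil => intro A h; exact EqvGen.refl _
  | cons x p ih =>
      rename_i L1 L2
      intro A h
      have e1 : A ++ x :: L1 = (A ++ [x]) ++ L1 := by simp
      have e2 : A ++ x :: L2 = (A ++ [x]) ++ L2 := by simp
      rw [e1, e2]
      exact ih (A ++ [x]) (e1 ▸ h)
  | swap x y L =>
      intro A h
      exact conn_swapAdj h
  | trans p q ih1 ih2 =>
      intro A h
      refine conn_trans (ih1 A h) (ih2 A ?_)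
      exact mem_of_perm h (List.Perm.append_left A p)

lemma conn_of_perm {l l' : List ℕ} (h : l ∈ weightWeakOrders n k) (hp : l.Perm l') :
    Conn n k l l' := by
  have := conn_of_perm_aux hp [] (by simpa using h)
  simpa using this

end UCAux

namespace UCAuxM
open Relation

/-- valid multisets: the multiset counterpart of membership in `weightWeakOrders` -/
def ValidM (n k : ℕ) (M : Multiset ℕ) : Prop :=
  Multiset.card M = n ∧ M.sum = k ∧ ∃ h, M.toFinset = Finset.range (h + 1)

def MStep (n k : ℕ) (M M' : Multiset ℕ) : Prop :=
  ValidM n k M ∧ ValidM n k M' ∧ ∃ (K : Multiset ℕ) (a b a' b' : ℕ),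
    M = a ::ₘ b ::ₘ K ∧ M' = a' ::ₘ b' ::ₘ K

def MRel (n k : ℕ) : Multiset ℕ → Multiset ℕ → Prop := Relation.ReflTransGen (MStep n k)

lemma mstep_symm {n k : ℕ} : Symmetric (MStep n k) := by
  rintro M M' ⟨h1, h2, K, a, b, a', b', e, e'⟩
  exact ⟨h2, h1, K, a', b', a, b, e', e⟩

lemma mrel_symm {n k : ℕ} {M M' : Multiset ℕ} (h : MRel n k M M') : MRel n k M' M :=
  (@Relation.ReflTransGen.stdSymm _ (MStep n k) ⟨fun _ _ h => mstep_symm h⟩).symm _ _ h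

lemma mrel_trans {n k : ℕ} {a b c : Multiset ℕ} (h : MRel n k a b) (h' : MRel n k b c) :
    MRel n k a c := Relation.ReflTransGen.trans h h'

lemma mrel_valid_right {n k : ℕ} {M M' : Multiset ℕ} (h : MRel n k M M')
    (hv : ValidM n k M) : ValidM n k M' := by
  induction h with
  | refl => exact hv
  | tail _ hstep ih => exact hstep.2.1

/-- unit transfer step on the "excess" part, everything bounded by h -/
def UStep (h : ℕ) (E E' : Multiset ℕ) : Prop :=
  ∃ (K : Multiset ℕ) (a b : ℕ), a + 1 ≤ h ∧ 1 ≤ b ∧ b ≤ h ∧ (∀ x ∈ K, x ≤ h) ∧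
    E = a ::ₘ b ::ₘ K ∧ E' = (a + 1) ::ₘ (b - 1) ::ₘ K

def URel (h : ℕ) : Multiset ℕ → Multiset ℕ → Prop := Relation.ReflTransGen (UStep h)

def greedy (h : ℕ) : ℕ → ℕ → Multiset ℕ
  | 0, _ => 0
  | s + 1, e => min h e ::ₘ greedy h s (e - min h e)

lemma greedy_le (h : ℕ) : ∀ s e, ∀ x ∈ greedy h s e, x ≤ h := by
  intro s
  induction s with
  | zero => intro e x hx; simp [greedy] at hx
  | succ s ih =>
      intro e x hx
      rw [greedy, Multiset.mem_cons] at hx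
      rcases hx with rfl | hx
      · exact min_le_left _ _
      · exact ih _ x hx

lemma exists_max {E : Multiset ℕ} (hE : E ≠ 0) : ∃ x ∈ E, ∀ y ∈ E, y ≤ x := by
  induction E using Multiset.induction_on with
  | empty => exact absurd rfl hE
  | cons a s ih =>
      rcases eq_or_ne s 0 with rfl | hs
      · exact ⟨a, by simp, by simp⟩
      · obtain ⟨x, hx, hmax⟩ := ih hs
        rcases le_total a x with hax | hxa
        · exact ⟨x, Multiset.mem_cons_of_mem hx, by
            intro y hy; rcases Multiset.mem_cons.mp hy with rfl | hy
            exacts [hax, hmax y hy]⟩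
        · exact ⟨a, Multiset.mem_cons_self a s, by
            intro y hy; rcases Multiset.mem_cons.mp hy with rfl | hy
            exacts [le_rfl, (hmax y hy).trans hxa]⟩

lemma exists_pos_of_sum_pos {E : Multiset ℕ} (h : 0 < E.sum) : ∃ y ∈ E, 1 ≤ y := by
  by_contra hc
  push_neg at hc
  have : E.sum = 0 := Multiset.sum_eq_zero_iff.mpr (fun x hx => by
    have := hc x hx; omega)
  omega

lemma ustep_cons {h t : ℕ} (ht : t ≤ h) {E E' : Multiset ℕ} (hu : UStep h E E') :
    UStep h (t ::ₘ E) (t ::ₘ E') := by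
  obtain ⟨K, a, b, h1, h2, h3, h4, e, e'⟩ := hu
  refine ⟨t ::ₘ K, a, b, h1, h2, h3, ?_, ?_, ?_⟩
  · intro x hx; rcases Multiset.mem_cons.mp hx with rfl | hx
    exacts [ht, h4 x hx]
  · rw [e]
    rw [Multiset.cons_swap t a, Multiset.cons_swap t b]
  · rw [e']
    rw [Multiset.cons_swap t (a+1), Multiset.cons_swap t (b-1)]

lemma urel_cons {h t : ℕ} (ht : t ≤ h) {E E' : Multiset ℕ} (hu : URel h E E') :
    URel h (t ::ₘ E) (t ::ₘ E') :=
  Relation.ReflTransGen.lift (fun s => t ::ₘ s) (fun _ _ hs => ustep_cons ht hs) _ _ hu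

lemma urel_greedy (h : ℕ) : ∀ s (E : Multiset ℕ) e, Multiset.card E = s → E.sum = e →
    (∀ x ∈ E, x ≤ h) → URel h E (greedy h s e) := by
  intro s
  induction s with
  | zero =>
      intro E e hc hs _
      have : E = 0 := Multiset.card_eq_zero.mp hc
      subst this
      simp at hs
      subst hs
      exact Relation.ReflTransGen.refl
  | succ s ih =>
      -- inner induction on d ≥ min h e - max
      suffices H : ∀ d (E : Multiset ℕ) e x, Multiset.card E = s + 1 → E.sum = e →
          (∀ y ∈ E, y ≤ h) → x ∈ E → (∀ y ∈ E, y ≤ x) → min h e - x ≤ d →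
          URel h E (greedy h (s+1) e) by
        intro E e hc hs hb
        have hE0 : E ≠ 0 := by
          intro he; rw [he] at hc; simp at hc
        obtain ⟨x, hx, hmax⟩ := exists_max hE0
        exact H (min h e - x) E e x hc hs hb hx hmax le_rfl
      intro d
      induction d with
      | zero =>
          intro E e x hc hs hb hx hmax hd
          -- x = min h e
          have hxh : x ≤ h := hb x hx
          have hxe : x ≤ e := by
            rw [← hs]
            exact Multiset.single_le_sum (fun y _ => Nat.zero_le y) x hx
          have hxm : x = min h e := by omega
          have hE : E = x ::ₘ E.erase x := (Multiset.cons_erase hx).symm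
          have hcard : Multiset.card (E.erase x) = s := by
            rw [Multiset.card_erase_of_mem hx, hc]; rfl
          have hsum : (E.erase x).sum = e - x := by
            have : E.sum = x + (E.erase x).sum := by
              conv_lhs => rw [hE]
              rw [Multiset.sum_cons]
            omega
          have hb' : ∀ y ∈ E.erase x, y ≤ h := fun y hy => hb y (Multiset.mem_of_mem_erase hy)
          have hrec := ih (E.erase x) (e - x) hcard hsum hb'
          have : greedy h (s+1) e = x ::ₘ greedy h s (e - x) := by
            rw [greedy, ← hxm]
          rw [this, hE]
          exact urel_cons hxh hrec
      | succ d ihd =>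
          intro E e x hc hs hb hx hmax hd
          rcases Nat.lt_or_ge d (min h e - x) with hlt | hge
          · -- x < min h e : do one transfer step
            have hxlt : x < min h e := by omega
            have hxe : x < e := lt_of_lt_of_le hxlt (min_le_right _ _)
            have hsum_erase : (E.erase x).sum = e - x := by
              have : E.sum = x + (E.erase x).sum := by
                conv_lhs => rw [← Multiset.cons_erase hx]
                rw [Multiset.sum_cons]
              omega
            have hpos : 0 < (E.erase x).sum := by omega
            obtain ⟨y, hy, hy1⟩ := exists_pos_of_sum_pos hpos
            set K := (E.erase x).erase y with hK
            have hEy : E.erase x = y ::ₘ K := (Multiset.cons_erase hy).symm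
            have hE : E = x ::ₘ y ::ₘ K := by
              rw [← hEy, Multiset.cons_erase hx]
            have hyh : y ≤ h := hb y (Multiset.mem_of_mem_erase hy)
            have hKb : ∀ z ∈ K, z ≤ h := fun z hz =>
              hb z (Multiset.mem_of_mem_erase (Multiset.mem_of_mem_erase hz))
            have hstep : UStep h E ((x+1) ::ₘ (y-1) ::ₘ K) :=
              ⟨K, x, y, by omega, hy1, hyh, hKb, hE, rfl⟩
            have hymax : y ≤ x := hmax y (Multiset.mem_of_mem_erase hy)
            have hKmax : ∀ z ∈ K, z ≤ x := fun z hz =>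
              hmax z (Multiset.mem_of_mem_erase (Multiset.mem_of_mem_erase hz))
            have hcard' : Multiset.card ((x+1) ::ₘ (y-1) ::ₘ K) = s + 1 := by
              have : Multiset.card E = Multiset.card K + 2 := by rw [hE]; simp
              simp
              omega
            have hsum' : ((x+1) ::ₘ (y-1) ::ₘ K).sum = e := by
              have : E.sum = x + y + K.sum := by rw [hE]; simp [Multiset.sum_cons]; ring
              simp [Multiset.sum_cons]
              omega
            have hb' : ∀ z ∈ (x+1) ::ₘ (y-1) ::ₘ K, z ≤ h := by
              intro z hz
              rcases Multiset.mem_cons.mp hz with rfl | hz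
              · omega
              rcases Multiset.mem_cons.mp hz with rfl | hz
              · omega
              · exact hKb z hz
            have hmax' : ∀ z ∈ (x+1) ::ₘ (y-1) ::ₘ K, z ≤ x + 1 := by
              intro z hz
              rcases Multiset.mem_cons.mp hz with rfl | hz
              · exact le_rfl
              rcases Multiset.mem_cons.mp hz with rfl | hz
              · omega
              · exact (hKmax z hz).trans (by omega)
            refine Relation.ReflTransGen.head hstep ?_
            exact ihd ((x+1) ::ₘ (y-1) ::ₘ K) e (x+1) hcard' hsum' hb'
              (Multiset.mem_cons_self _ _) hmax' (by omega)
          · exact ihd E e x hc hs hb hx hmax hge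

lemma count_range (j m : ℕ) :
    Multiset.count j (Multiset.range m) = if j < m then 1 else 0 := by
  by_cases hj : j < m
  · rw [if_pos hj]
    exact Multiset.count_eq_one_of_mem (Multiset.nodup_range m) (Multiset.mem_range.mpr hj)
  · rw [if_neg hj]
    exact Multiset.count_eq_zero_of_notMem (fun hc => hj (Multiset.mem_range.mp hc))

lemma base_le {M : Multiset ℕ} {h : ℕ} (hfin : M.toFinset = Finset.range (h + 1)) :
    Multiset.range (h + 1) ≤ M := by
  rw [Multiset.le_iff_count]
  intro a
  rw [count_range]
  by_cases ha : a < h + 1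
  · rw [if_pos ha]
    have : a ∈ M := by
      rw [← Multiset.mem_toFinset, hfin]
      exact Finset.mem_range.mpr ha
    exact Multiset.one_le_count_iff_mem.mpr this
  · rw [if_neg ha]; exact Nat.zero_le _

lemma sum_le_of_le {s t : Multiset ℕ} (h : s ≤ t) : s.sum ≤ t.sum := by
  obtain ⟨u, rfl⟩ := Multiset.le_iff_exists_add.mp h
  rw [Multiset.sum_add]
  exact Nat.le_add_right _ _

lemma range_le_range {m m' : ℕ} (h : m ≤ m') : Multiset.range m ≤ Multiset.range m' := by
  rw [Multiset.le_iff_count]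
  intro a
  rw [count_range, count_range]
  by_cases ha : a < m
  · rw [if_pos ha, if_pos (by omega)]
  · rw [if_neg ha]; exact Nat.zero_le _

lemma sum_range_succ' (h : ℕ) :
    (Multiset.range (h + 2)).sum = (Multiset.range (h + 1)).sum + (h + 1) := by
  rw [Multiset.range_succ, Multiset.sum_cons]
  omega

lemma add_cons_cons (s t : Multiset ℕ) (a b : ℕ) :
    s + (a ::ₘ b ::ₘ t) = a ::ₘ b ::ₘ (s + t) := by
  rw [add_comm, Multiset.cons_add, Multiset.cons_add, add_comm t s]

lemma toFinset_base_add {E : Multiset ℕ} {h : ℕ} (hb : ∀ x ∈ E, x ≤ h) :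
    (Multiset.range (h + 1) + E).toFinset = Finset.range (h + 1) := by
  ext a
  simp only [Multiset.toFinset_add, Finset.mem_union, Multiset.mem_toFinset,
    Multiset.mem_range, Finset.mem_range]
  constructor
  · rintro (ha | ha)
    · exact ha
    · have := hb a ha; omega
  · intro ha; exact Or.inl ha

section Params
variable {n k : ℕ}

lemma mrel_of_urel {h : ℕ} {E E' : Multiset ℕ} (hu : URel h E E')
    (hv : ValidM n k (Multiset.range (h + 1) + E)) :
    MRel n k (Multiset.range (h + 1) + E) (Multiset.range (h + 1) + E') ∧
      ValidM n k (Multiset.range (h + 1) + E') := by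
  induction hu with
  | refl => exact ⟨Relation.ReflTransGen.refl, hv⟩
  | tail _ hstep ih =>
      obtain ⟨ihrel, ihval⟩ := ih
      obtain ⟨K, a, b, h1, h2, h3, h4, e1, e2⟩ := hstep
      have hbl : ∀ x ∈ a ::ₘ b ::ₘ K, x ≤ h := by
        intro x hx
        rcases Multiset.mem_cons.mp hx with rfl | hx
        · omega
        rcases Multiset.mem_cons.mp hx with rfl | hx
        · omega
        · exact h4 x hx
      have hbr : ∀ x ∈ (a + 1) ::ₘ (b - 1) ::ₘ K, x ≤ h := by
        intro x hx
        rcases Multiset.mem_cons.mp hx with rfl | hx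
        · omega
        rcases Multiset.mem_cons.mp hx with rfl | hx
        · omega
        · exact h4 x hx
      subst e1
      subst e2
      obtain ⟨hcard, hsum, -⟩ := id ihval
      have hval' : ValidM n k (Multiset.range (h + 1) + ((a + 1) ::ₘ (b - 1) ::ₘ K)) := by
        refine ⟨?_, ?_, h, toFinset_base_add hbr⟩
        · rw [add_cons_cons] at hcard ⊢
          simpa using hcard
        · rw [add_cons_cons] at hsum ⊢
          rw [Multiset.sum_cons, Multiset.sum_cons] at hsum ⊢
          omega
      refine ⟨Relation.ReflTransGen.tail ihrel ?_, hval'⟩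
      exact ⟨ihval, hval', Multiset.range (h + 1) + K, a, b, a + 1, b - 1,
        add_cons_cons _ _ _ _, add_cons_cons _ _ _ _⟩

lemma mrel_level {M : Multiset ℕ} {h : ℕ} (hv : ValidM n k M)
    (hfin : M.toFinset = Finset.range (h + 1)) :
    MRel n k M (Multiset.range (h + 1) +
      greedy h (n - (h + 1)) (k - (Multiset.range (h + 1)).sum)) := by
  have hle := base_le hfin
  set E := M - Multiset.range (h + 1) with hE
  have hdec : M = Multiset.range (h + 1) + E := by
    rw [hE, add_comm]
    exact (tsub_add_cancel_of_le hle).symm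
  have hbE : ∀ x ∈ E, x ≤ h := by
    intro x hx
    have hxM : x ∈ M := Multiset.mem_of_le (Multiset.sub_le_self _ _) hx
    have : x ∈ M.toFinset := Multiset.mem_toFinset.mpr hxM
    rw [hfin] at this
    have := Finset.mem_range.mp this
    omega
  obtain ⟨hcard, hsum, _⟩ := hv
  have hcardE : Multiset.card E = n - (h + 1) := by
    rw [hdec] at hcard
    rw [Multiset.card_add, Multiset.card_range] at hcard
    omega
  have hsumE : E.sum = k - (Multiset.range (h + 1)).sum := by
    rw [hdec] at hsum
    rw [Multiset.sum_add] at hsum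
    omega
  have hu := urel_greedy h (Multiset.card E) E E.sum rfl rfl hbE
  rw [hcardE, hsumE] at hu
  have := mrel_of_urel (n := n) (k := k) hu (by rw [← hdec]; exact ⟨hcard, hsum, h, hfin⟩)
  rw [← hdec] at this
  exact this.1

lemma mstep_up {h s e : ℕ} (he1 : h + 1 ≤ e) (he2 : e ≤ s * h)
    (hval : ValidM n k (Multiset.range (h + 1) + greedy h s e)) :
    ∃ M', MStep n k (Multiset.range (h + 1) + greedy h s e) M' ∧ ValidM n k M' ∧
      M'.toFinset = Finset.range (h + 2) := by
  have hh1 : 1 ≤ h := by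
    rcases Nat.eq_zero_or_pos h with rfl | hp
    · simp at he2; omega
    · exact hp
  obtain ⟨s'', rfl⟩ : ∃ s'', s = s'' + 2 := by
    rcases s with _ | _ | s''
    · simp at he2; omega
    · simp at he2; omega
    · exact ⟨s'', rfl⟩
  have hme : min h e = h := by omega
  set e' := e - h with he'
  have hg1 : greedy h (s'' + 2) e = h ::ₘ greedy h (s'' + 1) e' := by
    rw [greedy, hme]
  set t' := min h e' with ht'
  set G2 := greedy h s'' (e' - t') with hG2
  have hg2 : greedy h (s'' + 1) e' = t' ::ₘ G2 := by
    rw [greedy]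
  have hG2b : ∀ x ∈ G2, x ≤ h := greedy_le h _ _
  have he'1 : 1 ≤ e' := by omega
  have ht'1 : 1 ≤ t' := by omega
  have ht'h : t' ≤ h := min_le_left _ _
  -- M = h ::ₘ t' ::ₘ (base + G2)
  have hM : Multiset.range (h + 1) + greedy h (s'' + 2) e =
      h ::ₘ t' ::ₘ (Multiset.range (h + 1) + G2) := by
    rw [hg1, hg2, add_cons_cons]
  set M' : Multiset ℕ := (h + 1) ::ₘ (t' - 1) ::ₘ (Multiset.range (h + 1) + G2) with hM'
  have hfin' : M'.toFinset = Finset.range (h + 2) := by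
    rw [hM']
    ext a
    simp only [Multiset.toFinset_cons, Finset.mem_insert, Multiset.toFinset_add,
      Finset.mem_union, Multiset.mem_toFinset, Multiset.mem_range, Finset.mem_range]
    constructor
    · rintro (rfl | rfl | ha | ha)
      · omega
      · omega
      · omega
      · have := hG2b a ha; omega
    · intro ha
      rcases Nat.lt_or_ge a (h + 1) with h1 | h1
      · exact Or.inr (Or.inr (Or.inl h1))
      · left; omega
  obtain ⟨hcard, hsum, -⟩ := id hval
  have hval' : ValidM n k M' := by
    refine ⟨?_, ?_, h + 1, hfin'⟩
    · rw [hM'] ; rw [hM] at hcard; simpa using hcard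
    · rw [hM'] ; rw [hM] at hsum
      rw [Multiset.sum_cons, Multiset.sum_cons] at hsum ⊢
      omega
  refine ⟨M', ?_, hval', hfin'⟩
  refine ⟨hval, hval', Multiset.range (h + 1) + G2, h, t', h + 1, t' - 1, hM, hM'⟩

lemma mrel_to_top : ∀ (d : ℕ) (M : Multiset ℕ) (h : ℕ), ValidM n k M →
    M.toFinset = Finset.range (h + 1) →
    (∃ (M'' : Multiset ℕ) (h'' : ℕ), ValidM n k M'' ∧
      M''.toFinset = Finset.range (h'' + 1) ∧ h'' = h + d) →
    MRel n k M (Multiset.range (h + d + 1) +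
      greedy (h + d) (n - (h + d + 1)) (k - (Multiset.range (h + d + 1)).sum)) := by
  intro d
  induction d with
  | zero =>
      intro M h hv hfin _
      simpa using mrel_level hv hfin
  | succ d ih =>
      intro M h hv hfin hex
      obtain ⟨M'', h'', hv'', hfin'', hh''⟩ := hex
      -- climb one level
      have hc1 := mrel_level hv hfin
      have hvT := mrel_valid_right hc1 hv
      -- e ≥ h+1
      have hsub1 : (Multiset.range (h + 1)).sum ≤ k := by
        have := sum_le_of_le (base_le hfin)
        rw [hv.2.1] at this
        exact this
      have hsub2 : (Multiset.range (h + 2)).sum ≤ k := by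
        have h1 : Multiset.range (h + 2) ≤ Multiset.range (h'' + 1) :=
          range_le_range (by omega)
        have h2 := sum_le_of_le (h1.trans (base_le hfin''))
        rw [hv''.2.1] at h2
        exact h2
      have he1 : h + 1 ≤ k - (Multiset.range (h + 1)).sum := by
        have := sum_range_succ' h
        omega
      -- e ≤ s * h
      have hle := base_le hfin
      set E := M - Multiset.range (h + 1) with hE
      have hdec : M = Multiset.range (h + 1) + E := by
        rw [hE, add_comm]; exact (tsub_add_cancel_of_le hle).symm
      have hbE : ∀ x ∈ E, x ≤ h := by
        intro x hx
        have hxM : x ∈ M := Multiset.mem_of_le (Multiset.sub_le_self _ _) hx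
        have : x ∈ M.toFinset := Multiset.mem_toFinset.mpr hxM
        rw [hfin] at this
        have := Finset.mem_range.mp this
        omega
      have hcardE : Multiset.card E = n - (h + 1) := by
        have := hv.1
        rw [hdec, Multiset.card_add, Multiset.card_range] at this
        omega
      have hsumE : E.sum = k - (Multiset.range (h + 1)).sum := by
        have := hv.2.1
        rw [hdec, Multiset.sum_add] at this
        omega
      have he2 : k - (Multiset.range (h + 1)).sum ≤ (n - (h + 1)) * h := by
        have := Multiset.sum_le_card_nsmul E h hbE
        rw [hsumE, hcardE] at this
        simpa [smul_eq_mul] using this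
      obtain ⟨M1, hstep, hv1, hfin1⟩ := mstep_up he1 he2 hvT
      have hc2 : MRel n k M M1 := Relation.ReflTransGen.tail hc1 hstep
      have hc3 := ih M1 (h + 1) hv1 hfin1 ⟨M'', h'', hv'', hfin'', by omega⟩
      have : h + 1 + d = h + (d + 1) := by omega
      rw [this] at hc3
      exact mrel_trans hc2 hc3

lemma mrel_main {M M' : Multiset ℕ} (hv : ValidM n k M) (hv' : ValidM n k M') :
    MRel n k M M' := by
  obtain ⟨_, _, h, hfin⟩ := id hv
  obtain ⟨_, _, h', hfin'⟩ := id hv'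
  rcases le_total h h' with hle | hle
  · obtain ⟨d, rfl⟩ := Nat.exists_eq_add_of_le hle
    have c1 := mrel_to_top d M h hv hfin ⟨M', h + d, hv', hfin', rfl⟩
    have c2 := mrel_to_top 0 M' (h + d) hv' hfin' ⟨M', h + d, hv', hfin', by omega⟩
    simp only [Nat.add_zero] at c2
    exact mrel_trans c1 (mrel_symm c2)
  · obtain ⟨d, rfl⟩ := Nat.exists_eq_add_of_le hle
    have c1 := mrel_to_top d M' h' hv' hfin' ⟨M, h' + d, hv, hfin, rfl⟩
    have c2 := mrel_to_top 0 M (h' + d) hv hfin ⟨M, h' + d, hv, hfin, by omega⟩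
    simp only [Nat.add_zero] at c2
    exact mrel_trans c2 (mrel_symm c1)

end Params
end UCAuxM


namespace UCAux
open Relation UCAuxM

variable {n k : ℕ}

lemma mem_iff_valid {l : List ℕ} :
    l ∈ weightWeakOrders n k ↔ ValidM n k (↑l : Multiset ℕ) := by
  constructor
  · rintro ⟨⟨hlen, h, hfin⟩, hsum⟩
    exact ⟨by simpa using hlen, by simpa using hsum, h, by simpa using hfin⟩
  · rintro ⟨hlen, hsum, h, hfin⟩
    exact ⟨⟨by simpa using hlen, h, by simpa using hfin⟩, by simpa using hsum⟩

lemma coe_rep (a b : ℕ) (K : Multiset ℕ) :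
    ((a :: K.toList ++ [b] : List ℕ) : Multiset ℕ) = a ::ₘ b ::ₘ K := by
  have : (a :: K.toList ++ [b] : List ℕ) = a :: (K.toList ++ [b]) := by simp
  rw [this]
  rw [← Multiset.cons_coe]
  congr 1
  calc (↑(K.toList ++ [b]) : Multiset ℕ) = ↑(b :: K.toList) :=
        Multiset.coe_eq_coe.mpr (List.perm_append_singleton b K.toList)
    _ = b ::ₘ ↑K.toList := by rw [Multiset.cons_coe]
    _ = b ::ₘ K := by rw [Multiset.coe_toList]

lemma mstep_conn {M M' : Multiset ℕ} (hstep : MStep n k M M') {l l' : List ℕ}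
    (hl : l ∈ weightWeakOrders n k) (hl' : l' ∈ weightWeakOrders n k)
    (hM : (↑l : Multiset ℕ) = M) (hM' : (↑l' : Multiset ℕ) = M') :
    Conn n k l l' := by
  obtain ⟨hv, hv', K, a, b, a', b', e, e'⟩ := hstep
  set r := a :: K.toList ++ [b] with hr
  set r' := a' :: K.toList ++ [b'] with hr'
  have hcr : (↑r : Multiset ℕ) = M := by rw [hr, coe_rep, e]
  have hcr' : (↑r' : Multiset ℕ) = M' := by rw [hr', coe_rep, e']
  have hrm : r ∈ weightWeakOrders n k := mem_iff_valid.mpr (hcr ▸ hv)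
  have hrm' : r' ∈ weightWeakOrders n k := mem_iff_valid.mpr (hcr' ▸ hv')
  have hp : l.Perm r := Multiset.coe_eq_coe.mp (by rw [hcr, hM])
  have hp' : r'.Perm l' := Multiset.coe_eq_coe.mp (by rw [hcr', hM'])
  have c1 : Conn n k l r := conn_of_perm hl hp
  have c3 : Conn n k r' l' := conn_of_perm hrm' hp'
  have c2 : Conn n k r r' := EqvGen.rel _ _
    ⟨hrm, hrm', Or.inr (by rw [hr, hr', mid_cons_concat, mid_cons_concat])⟩
  exact conn_trans c1 (conn_trans c2 c3)

lemma mrel_conn_aux {M M' : Multiset ℕ} (h : MRel n k M M') :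
    ∀ l l' : List ℕ, (↑l : Multiset ℕ) = M → (↑l' : Multiset ℕ) = M' →
    l ∈ weightWeakOrders n k → l' ∈ weightWeakOrders n k → Conn n k l l' := by
  induction h with
  | refl =>
      intro l l' hm hm' hl hl'
      exact conn_of_perm hl (Multiset.coe_eq_coe.mp (by rw [hm, hm']))
  | tail hrel hstep ih =>
      rename_i b c
      intro l l' hm hm' hl hl'
      have hbv : ValidM n k b := hstep.1
      set lb := b.toList with hlb
      have hcb : (↑lb : Multiset ℕ) = b := Multiset.coe_toList b
      have hlbm : lb ∈ weightWeakOrders n k := mem_iff_valid.mpr (hcb ▸ hbv)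
      exact conn_trans (ih l lb hm hcb hl hlbm) (mstep_conn hstep hlbm hl' hcb hm')

/-- connectivity: any two weight-k weak order words of length n are connected -/
lemma conn_all {l l' : List ℕ} (hl : l ∈ weightWeakOrders n k)
    (hl' : l' ∈ weightWeakOrders n k) : Conn n k l l' := by
  have h := mrel_main (n := n) (k := k) (mem_iff_valid.mp hl) (mem_iff_valid.mp hl')
  exact mrel_conn_aux h l l' rfl rfl hl hl'

end UCAux


namespace UCPerm

variable {α : Type*} [Finite α] [DecidableEq α]

lemma pow_apply_comm (τ : Equiv.Perm α) (i : ℕ) (x : α) :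
    (τ ^ (i + 1)) x = τ ((τ ^ i) x) := by
  rw [pow_succ' τ i, Equiv.Perm.mul_apply]

/-- merging two cycles of a permutation with a swap -/
lemma sameCycle_swap_merge (τ : Equiv.Perm α) (a b : α) (hab : ¬ τ.SameCycle a b) :
    (∀ x y, τ.SameCycle x y → (τ * Equiv.swap a b).SameCycle x y) ∧
      (τ * Equiv.swap a b).SameCycle a b := by
  set σ := τ * Equiv.swap a b with hσ
  have hσa : σ a = τ b := by rw [hσ, Equiv.Perm.mul_apply, Equiv.swap_apply_left]
  have hσb : σ b = τ a := by rw [hσ, Equiv.Perm.mul_apply, Equiv.swap_apply_right]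
  have hσx : ∀ x, x ≠ a → x ≠ b → σ x = τ x := by
    intro x hxa hxb
    rw [hσ, Equiv.Perm.mul_apply, Equiv.swap_apply_of_ne_of_ne hxa hxb]
  -- period of b under τ
  have hex : ∃ p, 0 < p ∧ (τ ^ p) b = b := by
    refine ⟨orderOf τ, ?_, by rw [pow_orderOf_eq_one]; rfl⟩
    have : IsOfFinOrder τ := by
      have : Finite (Equiv.Perm α) := by infer_instance
      exact isOfFinOrder_of_finite τ
    exact this.orderOf_pos
  set p := Nat.find hex with hp
  obtain ⟨hppos, hpfix⟩ : 0 < p ∧ (τ ^ p) b = b := Nat.find_spec hex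
  have hmin : ∀ j, 0 < j → j < p → (τ ^ j) b ≠ b := by
    intro j hj hjp hfix
    exact Nat.find_min hex hjp ⟨hj, hfix⟩
  have hnota : ∀ j : ℕ, (τ ^ j) b ≠ a := by
    intro j hfix
    exact hab (Equiv.Perm.SameCycle.symm ⟨(j : ℤ), by rw [zpow_natCast]; exact hfix⟩)
  have hkey : ∀ j, 1 ≤ j → j ≤ p → (σ ^ j) a = (τ ^ j) b := by
    intro j
    induction j with
    | zero => omega
    | succ j ih =>
        intro _ hjp
        rcases Nat.eq_zero_or_pos j with rfl | hj
        · simpa [pow_one] using hσa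
        · have hij := ih hj (by omega)
          rw [pow_apply_comm, pow_apply_comm, hij]
          exact hσx _ (hnota j) (hmin j hj (by omega))
  have hscab : σ.SameCycle a b := by
    refine ⟨(p : ℤ), ?_⟩
    rw [zpow_natCast]
    rw [hkey p hppos le_rfl]
    exact hpfix
  have hstep : ∀ x, σ.SameCycle x (τ x) := by
    intro x
    by_cases hxa : x = a
    · rw [hxa]
      have h1 : σ.SameCycle a (σ b) := hscab.trans ⟨(1 : ℤ), by simp⟩
      rw [hσb] at h1
      exact h1
    by_cases hxb : x = b
    · rw [hxb]
      have h1 : σ.SameCycle b (σ a) := hscab.symm.trans ⟨(1 : ℤ), by simp⟩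
      rw [hσa] at h1
      exact h1
    · rw [← hσx x hxa hxb]
      exact ⟨(1 : ℤ), by simp⟩
  refine ⟨?_, hscab⟩
  intro x y hxy
  -- extract a ℕ power
  have : Fintype α := Fintype.ofFinite α
  obtain ⟨i, -, -, hi⟩ := hxy.exists_pow_eq τ
  have hpowstep : ∀ m : ℕ, σ.SameCycle x ((τ ^ m) x) := by
    intro m
    induction m with
    | zero => exact ⟨0, by simp⟩
    | succ m ih =>
        rw [pow_apply_comm]
        exact ih.trans (hstep ((τ ^ m) x))
  rw [← hi]
  exact hpowstep i

end UCPerm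


namespace UCAux
open Relation

variable {n k : ℕ}

lemma finite_bdd (k : ℕ) : ∀ n : ℕ, {l : List ℕ | l.length = n ∧ ∀ x ∈ l, x ≤ k}.Finite := by
  intro n
  induction n with
  | zero =>
      apply Set.Finite.subset (Set.finite_singleton ([] : List ℕ))
      rintro l ⟨hl, -⟩
      simp [List.length_eq_zero_iff.mp hl]
  | succ n ih =>
      apply Set.Finite.subset (Set.Finite.image2 List.cons (Set.finite_Iic k) ih)
      rintro l ⟨hl, hb⟩
      cases l with
      | nil => simp at hl
      | cons x t =>
          refine Set.mem_image2_of_mem ?_ ⟨?_, ?_⟩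
          · exact hb x (by simp)
          · simpa using hl
          · exact fun y hy => hb y (by simp [hy])

lemma finite_WW (n k : ℕ) : (weightWeakOrders n k).Finite := by
  apply Set.Finite.subset (finite_bdd k n)
  rintro l ⟨⟨hlen, -⟩, hsum⟩
  exact ⟨hlen, fun x hx => hsum ▸ List.single_le_sum (fun y _ => Nat.zero_le y) x hx⟩

lemma length_of_mem {l : List ℕ} (h : l ∈ weightWeakOrders n k) : l.length = n := h.1.1
lemma sum_of_mem {l : List ℕ} (h : l ∈ weightWeakOrders n k) : l.sum = k := h.2

lemma two_le_of_mem {l : List ℕ} (hk : 0 < k) (h : l ∈ weightWeakOrders n k) : 2 ≤ n := by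
  obtain ⟨⟨hlen, hh, hfin⟩, hsum⟩ := h
  match n, hlen with
  | 0, hlen =>
      rw [List.length_eq_zero_iff.mp hlen] at hfin
      exfalso
      have : (0 : ℕ) ∈ Finset.range (hh + 1) := Finset.mem_range.mpr (by omega)
      rw [← hfin] at this
      simp at this
  | 1, hlen =>
      obtain ⟨x, rfl⟩ := List.length_eq_one_iff.mp hlen
      exfalso
      have h0 : (0 : ℕ) ∈ Finset.range (hh + 1) := Finset.mem_range.mpr (by omega)
      rw [← hfin] at h0
      simp at h0
      subst h0
      simp at hsum
      omega
  | (m + 2), hlen => omega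

lemma dropLast_injOn (hn : 1 ≤ n) :
    Set.InjOn List.dropLast (weightWeakOrders n k) := by
  intro w hw w' hw' h
  have hwne : w ≠ [] := by
    intro hc; rw [hc] at hw; have := length_of_mem hw; simp at this; omega
  have hw'ne : w' ≠ [] := by
    intro hc; rw [hc] at hw'; have := length_of_mem hw'; simp at this; omega
  have e1 := List.dropLast_append_getLast hwne
  have e2 := List.dropLast_append_getLast hw'ne
  have hs1 : w.dropLast.sum + w.getLast hwne = k := by
    have := sum_of_mem hw
    rw [← e1, List.sum_append] at this
    simpa using this
  have hs2 : w'.dropLast.sum + w'.getLast hw'ne = k := by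
    have := sum_of_mem hw'
    rw [← e2, List.sum_append] at this
    simpa using this
  rw [h] at hs1
  have : w.getLast hwne = w'.getLast hw'ne := by omega
  rw [← e1, ← e2, h, this]

lemma mid_rot {l : List ℕ} (hl : 2 ≤ l.length) : Mid l = Pre (l.rotate 1) := by
  cases l with
  | nil => simp at hl
  | cons x t =>
      have htne : t ≠ [] := by
        intro hc; rw [hc] at hl; simp at hl
      have hrot : (x :: t).rotate 1 = t ++ [x] := by
        rw [List.rotate_cons_succ, List.rotate_zero]
      rw [hrot, Mid, Pre, List.dropLast_concat, List.dropLast_cons_of_ne_nil htne]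
      simp

lemma adj_shift {x y : List ℕ} (hx : x.length = n) (hy : y.length = n)
    (h : Mid x = Pre y) {q : ℕ} (hq : q + 1 < n - 1) :
    y.dropLast.getD q 0 = x.dropLast.getD (q + 1) 0 := by
  have h1 : q < y.dropLast.dropLast.length := by
    rw [List.length_dropLast, List.length_dropLast, hy]; omega
  have e1 : y.dropLast.getD q 0 = (Pre y).getD q 0 := by
    rw [Pre, List.getD_eq_getElem _ _ (show q < y.dropLast.length by
        rw [List.length_dropLast, hy]; omega),
      List.getD_eq_getElem _ _ h1]
    exact (List.getElem_dropLast h1).symm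
  have e2 : (Mid x).getD q 0 = x.dropLast.getD (q + 1) 0 := by
    rw [Mid]
    have hb : q < (x.dropLast.drop 1).length := by
      rw [List.length_drop, List.length_dropLast, hx]; omega
    rw [List.getD_eq_getElem _ _ hb, List.getD_eq_getElem _ _ (show q + 1 < x.dropLast.length by
        rw [List.length_dropLast, hx]; omega)]
    rw [List.getElem_drop]
    congr 1
    omega
  rw [e1, ← h, e2]

lemma conn_endpoints {l m : List ℕ} (h : EqvGen (SS n k) l m) :
    l = m ∨ (l ∈ weightWeakOrders n k ∧ m ∈ weightWeakOrders n k) := by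
  induction h with
  | rel a b hr => exact Or.inr ⟨hr.1, hr.2.1⟩
  | refl a => exact Or.inl rfl
  | symm a b _ ih => rcases ih with rfl | ⟨h1, h2⟩; exacts [Or.inl rfl, Or.inr ⟨h2, h1⟩]
  | trans a b c _ _ ih1 ih2 =>
      rcases ih1 with rfl | ⟨h1, h2⟩
      · exact ih2
      · rcases ih2 with rfl | ⟨h3, h4⟩
        · exact Or.inr ⟨h1, h2⟩
        · exact Or.inr ⟨h1, h4⟩

lemma conn_lift {l l' : List ℕ} (h : EqvGen (SS n k) l l') :
    ∀ (hl : l ∈ weightWeakOrders n k) (hl' : l' ∈ weightWeakOrders n k),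
      EqvGen (fun x y : ↥(weightWeakOrders n k) =>
        (y.1 = x.1.rotate 1 ∨ Mid x.1 = Mid y.1)) ⟨l, hl⟩ ⟨l', hl'⟩ := by
  induction h with
  | rel a b hr => intro hl hl'; exact EqvGen.rel _ _ hr.2.2
  | refl a =>
      intro hl hl'
      have : (⟨a, hl⟩ : ↥(weightWeakOrders n k)) = ⟨a, hl'⟩ := Subtype.ext rfl
      rw [this]
      exact EqvGen.refl _
  | symm a b hab ih => intro hl hl'; exact EqvGen.symm _ _ (ih hl' hl)
  | trans a b c hab hbc ih1 ih2 =>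
      intro hl hl'
      rcases conn_endpoints hab with rfl | ⟨-, hb⟩
      · exact ih2 hl hl'
      · exact EqvGen.trans _ _ _ (ih1 hl hb) (ih2 hb hl')

lemma eqvgen_cross {β : Type*} {R : β → β → Prop} (A : Set β) {x y : β}
    (h : EqvGen R x y) :
    (x ∈ A → y ∈ A ∨ ∃ u v, u ∈ A ∧ v ∉ A ∧ (R u v ∨ R v u)) ∧
      (y ∈ A → x ∈ A ∨ ∃ u v, u ∈ A ∧ v ∉ A ∧ (R u v ∨ R v u)) := by
  classical
  induction h with
  | rel a b hr =>
      constructor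
      · intro ha
        by_cases hb : b ∈ A
        · exact Or.inl hb
        · exact Or.inr ⟨a, b, ha, hb, Or.inl hr⟩
      · intro hb
        by_cases ha : a ∈ A
        · exact Or.inl ha
        · exact Or.inr ⟨b, a, hb, ha, Or.inr hr⟩
  | refl a => exact ⟨fun h => Or.inl h, fun h => Or.inl h⟩
  | symm a b _ ih => exact ⟨ih.2, ih.1⟩
  | trans a b c _ _ ih1 ih2 =>
      constructor
      · intro ha
        rcases ih1.1 ha with hb | hp
        · exact ih2.1 hb
        · exact Or.inr hp
      · intro hc
        rcases ih2.2 hc with hb | hp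
        · exact ih1.2 hb
        · exact Or.inr hp

end UCAux


namespace UCAux
open Relation

variable {n k : ℕ}

abbrev WT (n k : ℕ) := ↥(weightWeakOrders n k)

lemma merge_helper [Finite (WT n k)] (τ : Equiv.Perm (WT n k))
    (a b : WT n k)
    (h1 : Mid a.1 = Pre ((τ b).1)) (h2 : Mid b.1 = Pre ((τ a).1))
    (hInv : ∀ x, Mid x.1 = Pre ((τ x).1))
    (hab : ¬ τ.SameCycle a b) :
    ∃ τ' : Equiv.Perm (WT n k), (∀ x, Mid x.1 = Pre ((τ' x).1)) ∧
      (∀ x y, τ.SameCycle x y → τ'.SameCycle x y) ∧ τ'.SameCycle a b := by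
  classical
  obtain ⟨hpres, hnew⟩ := UCPerm.sameCycle_swap_merge τ a b hab
  refine ⟨τ * Equiv.swap a b, ?_, hpres, hnew⟩
  intro x
  by_cases hxa : x = a
  · subst hxa
    rw [show (τ * Equiv.swap x b) x = τ b by
      rw [Equiv.Perm.mul_apply, Equiv.swap_apply_left]]
    exact h1
  by_cases hxb : x = b
  · subst hxb
    rw [show (τ * Equiv.swap a x) x = τ a by
      rw [Equiv.Perm.mul_apply, Equiv.swap_apply_right]]
    exact h2
  · rw [show (τ * Equiv.swap a b) x = τ x by
      rw [Equiv.Perm.mul_apply, Equiv.swap_apply_of_ne_of_ne hxa hxb]]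
    exact hInv x

lemma helper_mid [Finite (WT n k)] (τ : Equiv.Perm (WT n k))
    (hInv : ∀ x, Mid x.1 = Pre ((τ x).1))
    (u v : WT n k) (hmid : Mid u.1 = Mid v.1) (huv : ¬ τ.SameCycle u v) :
    ∃ τ' : Equiv.Perm (WT n k), (∀ x, Mid x.1 = Pre ((τ' x).1)) ∧
      (∀ x y, τ.SameCycle x y → τ'.SameCycle x y) ∧ τ'.SameCycle u v := by
  exact merge_helper τ u v (hmid.trans (hInv v)) (hmid.symm.trans (hInv u)) hInv huv

lemma helper_rot [Finite (WT n k)] (hn : 2 ≤ n) (τ : Equiv.Perm (WT n k))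
    (hInv : ∀ x, Mid x.1 = Pre ((τ x).1))
    (u v : WT n k) (hrot : v.1 = u.1.rotate 1) (huv : ¬ τ.SameCycle u v) :
    ∃ τ' : Equiv.Perm (WT n k), (∀ x, Mid x.1 = Pre ((τ' x).1)) ∧
      (∀ x y, τ.SameCycle x y → τ'.SameCycle x y) ∧ τ'.SameCycle u v := by
  have hlenu : (2 : ℕ) ≤ u.1.length := by rw [length_of_mem u.2]; exact hn
  have hadjuv : Mid u.1 = Pre v.1 := by rw [hrot]; exact mid_rot hlenu
  have e : τ (τ⁻¹ v) = v := by simp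
  have h1 : Mid u.1 = Pre ((τ (τ⁻¹ v)).1) := by rw [e]; exact hadjuv
  have h2 : Mid (τ⁻¹ v).1 = Pre ((τ u).1) := by
    have := hInv (τ⁻¹ v)
    rw [e] at this
    rw [this, ← hadjuv, hInv u]
  have hscinv : τ.SameCycle (τ⁻¹ v) v := ⟨(1 : ℤ), by simp⟩
  have hab : ¬ τ.SameCycle u (τ⁻¹ v) := fun hsc => huv (hsc.trans hscinv)
  obtain ⟨τ', hi, hp, hs⟩ := merge_helper τ u (τ⁻¹ v) h1 h2 hInv hab
  exact ⟨τ', hi, hp, hs.trans (hp _ _ hscinv)⟩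

end UCAux


open UCAux Relation

/-- For all positive integers `n, k` with `k ≤ C(n,2)`, there is a universal
cycle for `W_k⁻(n)`, the set of prefixes (first `n-1` letters) of weight-`k`
weak order words of length `n`. -/
theorem exists_ucycle_weightWeakOrders_prefixes (n k : ℕ) (hn : 0 < n) (hk : 0 < k)
    (hkn : k ≤ n.choose 2) :
    ∃ a : ℕ → ℕ,
      IsUCycle (n - 1) (Nat.card (List.dropLast '' weightWeakOrders n k))
        (List.dropLast '' weightWeakOrders n k) a := by
  classical
  rcases Set.eq_empty_or_nonempty (weightWeakOrders n k) with hW | ⟨w₀l, hw₀⟩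
  · rw [hW, Set.image_empty]
    refine ⟨fun _ => 0, fun i hi => ?_, fun c hc => absurd hc (Set.notMem_empty c)⟩
    have h0 : Nat.card ↥(∅ : Set (List ℕ)) = 0 := by simp
    omega
  · have hn2 : 2 ≤ n := two_le_of_mem hk hw₀
    have hfin : (weightWeakOrders n k).Finite := finite_WW n k
    haveI : Finite (WT n k) := hfin.to_subtype
    haveI : Fintype (WT n k) := Fintype.ofFinite _
    set x₀ : WT n k := ⟨w₀l, hw₀⟩ with hx₀def
    -- the rotation permutation
    have hrotmem : ∀ x : WT n k, x.1.rotate 1 ∈ weightWeakOrders n k :=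
      fun x => rotate_mem x.2 1
    have hrotinj : Function.Injective
        (fun x : WT n k => (⟨x.1.rotate 1, hrotmem x⟩ : WT n k)) := by
      intro x y hxy
      have h1 : x.1.rotate 1 = y.1.rotate 1 := congrArg Subtype.val hxy
      have h2 := congrArg (fun l : List ℕ => l.rotate (n - 1)) h1
      simp only [List.rotate_rotate] at h2
      have e : (1 : ℕ) + (n - 1) = n := by omega
      rw [e] at h2
      have ex := List.rotate_length (x.1 : List ℕ)
      rw [length_of_mem x.2] at ex
      have ey := List.rotate_length (y.1 : List ℕ)
      rw [length_of_mem y.2] at ey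
      exact Subtype.ext (by rw [← ex, ← ey]; exact h2)
    let ρ : Equiv.Perm (WT n k) :=
      Equiv.ofBijective _ (Finite.injective_iff_bijective.mp hrotinj)
    have hρInv : ∀ x : WT n k, Mid x.1 = Pre ((ρ x).1) := by
      intro x
      have hre : (ρ x).1 = x.1.rotate 1 := rfl
      rw [hre]
      exact mid_rot (by rw [length_of_mem x.2]; exact hn2)
    -- maximal good permutation
    set X := Finset.univ.filter
      (fun τ : Equiv.Perm (WT n k) => ∀ x, Mid x.1 = Pre ((τ x).1)) with hX
    have hXne : X.Nonempty := ⟨ρ, Finset.mem_filter.mpr ⟨Finset.mem_univ _, hρInv⟩⟩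
    obtain ⟨τ, hτX, hτmax⟩ := Finset.exists_max_image X
      (fun τ => (Finset.univ.filter (fun y => τ.SameCycle x₀ y)).card) hXne
    have hτInv : ∀ x, Mid x.1 = Pre ((τ x).1) := (Finset.mem_filter.mp hτX).2
    -- τ has a single cycle
    have hone : ∀ y, τ.SameCycle x₀ y := by
      by_contra hc
      push_neg at hc
      obtain ⟨y₀, hy₀⟩ := hc
      set A : Set (WT n k) := {y | τ.SameCycle x₀ y} with hA
      have hlift := conn_lift (conn_all x₀.2 y₀.2) x₀.2 y₀.2
      have hx₀A : x₀ ∈ A := Equiv.Perm.SameCycle.refl τ x₀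
      have hy₀A : y₀ ∉ A := hy₀
      have hcross := (eqvgen_cross A hlift).1 hx₀A
      rcases hcross with h | ⟨u, v, huA, hvA, hR⟩
      · exact absurd h hy₀A
      have huv : ¬ τ.SameCycle u v := fun hsc => hvA (Equiv.Perm.SameCycle.trans huA hsc)
      have hnew : ∃ τ' : Equiv.Perm (WT n k), (∀ x, Mid x.1 = Pre ((τ' x).1)) ∧
          (∀ x y, τ.SameCycle x y → τ'.SameCycle x y) ∧ τ'.SameCycle u v := by
        rcases hR with (h | h) | (h | h)
        · exact helper_rot hn2 τ hτInv u v h huv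
        · exact helper_mid τ hτInv u v h huv
        · obtain ⟨τ', h1, h2, h3⟩ :=
            helper_rot hn2 τ hτInv v u h (fun hsc => huv hsc.symm)
          exact ⟨τ', h1, h2, h3.symm⟩
        · exact helper_mid τ hτInv u v h.symm huv
      obtain ⟨τ', hInv', hpres', hscuv⟩ := hnew
      have hsub : (Finset.univ.filter (fun y => τ.SameCycle x₀ y)) ⊂
          (Finset.univ.filter (fun y => τ'.SameCycle x₀ y)) := by
        rw [Finset.ssubset_iff_of_subset]
        · refine ⟨v, ?_, ?_⟩
          · simp only [Finset.mem_filter, Finset.mem_univ, true_and]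
            exact Equiv.Perm.SameCycle.trans (hpres' _ _ huA) hscuv
          · simp only [Finset.mem_filter, Finset.mem_univ, true_and]
            exact hvA
        · intro z hz
          simp only [Finset.mem_filter, Finset.mem_univ, true_and] at hz ⊢
          exact hpres' _ _ hz
      have hlt := Finset.card_lt_card hsub
      have hle := hτmax τ' (Finset.mem_filter.mpr ⟨Finset.mem_univ _, hInv'⟩)
      omega
    -- period
    have hex : ∃ j, 0 < j ∧ (τ ^ j) x₀ = x₀ := by
      refine ⟨orderOf τ, ?_, by rw [pow_orderOf_eq_one]; rfl⟩
      exact (isOfFinOrder_of_finite τ).orderOf_pos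
    set p := Nat.find hex with hpdef
    obtain ⟨hppos, hpfix⟩ : 0 < p ∧ (τ ^ p) x₀ = x₀ := Nat.find_spec hex
    set f : ℕ → WT n k := fun i => (τ ^ i) x₀ with hfdef
    have hfadj : ∀ t, Mid (f t).1 = Pre ((f (t + 1)).1) := by
      intro t
      have : f (t + 1) = τ (f t) := UCPerm.pow_apply_comm τ t x₀
      rw [this]
      exact hτInv _
    have hfmul : ∀ q r, f (p * q + r) = f r := by
      intro q
      induction q with
      | zero => intro r; simp
      | succ q ih =>
          intro r
          have e : p * (q + 1) + r = (p * q + r) + p := by ring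
          rw [e, hfdef]
          show (τ ^ (p * q + r + p)) x₀ = f r
          rw [pow_add, Equiv.Perm.mul_apply, hpfix]
          exact ih r
    have hfmod : ∀ t, f (t % p) = f t := by
      intro t
      conv_rhs => rw [← Nat.div_add_mod t p]
      exact (hfmul (t / p) (t % p)).symm
    have hinj : ∀ i j, i < p → j < p → f i = f j → i = j := by
      suffices hs : ∀ i j, i ≤ j → j < p → f i = f j → i = j by
        intro i j hi hj hf
        rcases le_total i j with h | h
        · exact hs i j h hj hf
        · exact (hs j i h hi hf.symm).symm
      intro i j hij hjp hf
      obtain ⟨d, rfl⟩ := Nat.exists_eq_add_of_le hij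
      have h1 : f (i + d) = (τ ^ i) ((τ ^ d) x₀) := by
        rw [hfdef]
        show (τ ^ (i + d)) x₀ = _
        rw [pow_add, Equiv.Perm.mul_apply]
      have h2 : (τ ^ i) x₀ = (τ ^ i) ((τ ^ d) x₀) := by
        rw [← h1]; exact hf
      have h3 : (τ ^ d) x₀ = x₀ := ((τ ^ i).injective h2).symm
      rcases Nat.eq_zero_or_pos d with rfl | hd
      · omega
      · exact absurd ⟨hd, h3⟩ (Nat.find_min hex (by omega))
    have hsurj : ∀ y, ∃ i, i < p ∧ f i = y := by
      intro y
      obtain ⟨i, -, -, hi⟩ := (hone y).exists_pow_eq τ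
      exact ⟨i % p, Nat.mod_lt _ hppos, by rw [hfmod]; exact hi⟩
    -- cardinality
    set N := Nat.card ↥(List.dropLast '' weightWeakOrders n k) with hNdef
    have hNp : N = p := by
      have hb : Function.Bijective (fun j : Fin p => f j.1) := by
        constructor
        · intro a b hab
          exact Fin.ext (hinj _ _ a.2 b.2 hab)
        · intro y
          obtain ⟨i, hip, hfi⟩ := hsurj y
          exact ⟨⟨i, hip⟩, hfi⟩
      have hcard := Nat.card_eq_of_bijective _ hb
      rw [hNdef, Nat.card_coe_set_eq,
        Set.ncard_image_of_injOn (dropLast_injOn (by omega)),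
        ← Nat.card_coe_set_eq]
      rw [← hcard]
      simp [Nat.card_eq_fintype_card]
    -- core shift property
    have hcore : ∀ (j : ℕ), ∀ q i, j + q < n - 1 →
        ((f (i + j)).1.dropLast).getD q 0 = ((f i).1.dropLast).getD (j + q) 0 := by
      intro j
      induction j with
      | zero => intro q i _; simp
      | succ j ih =>
          intro q i hlt
          have hadj : Mid (f (i + j)).1 = Pre ((f (i + j + 1)).1) := hfadj (i + j)
          have hs := adj_shift (length_of_mem (f (i + j)).2)
            (length_of_mem (f (i + j + 1)).2) hadj (q := q) (by omega)
          rw [show i + (j + 1) = i + j + 1 by omega, hs]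
          rw [ih (q + 1) i (by omega)]
          congr 1
          omega
    set aseq : ℕ → ℕ := fun t => ((f (t % N)).1.dropLast).getD 0 0 with haseq
    have hwin : ∀ i, (List.ofFn fun j : Fin (n - 1) => aseq ((i + j.1) % N)) =
        (f i).1.dropLast := by
      intro i
      apply List.ext_getElem
      · rw [List.length_ofFn, List.length_dropLast, length_of_mem (f i).2]
      · intro j h1 h2
        rw [List.getElem_ofFn]
        have hjlt : j < n - 1 := by
          rw [List.length_ofFn] at h1; exact h1
        have e0 : aseq ((i + j) % N) = ((f (i + j)).1.dropLast).getD 0 0 := by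
          rw [haseq]
          show ((f ((i + j) % N % N)).1.dropLast).getD 0 0 = _
          rw [hNp, hfmod, hfmod]
        rw [e0, hcore j 0 i (by omega)]
        rw [List.getD_eq_getElem _ _ (show j + 0 < (f i).1.dropLast.length by
          rw [List.length_dropLast, length_of_mem (f i).2]; omega)]
        simp
    refine ⟨aseq, ?_, ?_⟩
    · intro i hi
      rw [hwin i]
      exact ⟨(f i).1, (f i).2, rfl⟩
    · rintro c ⟨w, hw, rfl⟩
      obtain ⟨i, hip, hfi⟩ := hsurj ⟨w, hw⟩
      refine ⟨i, ⟨by omega, ?_⟩, ?_⟩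
      · rw [hwin i, hfi]
      · rintro j ⟨hj, hwj⟩
        rw [hwin j] at hwj
        have hfw : (f j).1 = w := dropLast_injOn (by omega) (f j).2 hw hwj
        refine hinj j i (by omega) hip ?_
        rw [hfi]
        exact Subtype.ext hfw
end

section
/- For every positive integer n and every natural number h with 0 ≤ h < n−1, there exists a universal cycle for W(n,h), the set of weak order words of length n with height exactly h. -/
/-- `W(n,h)`: the set of weak order words of length `n` with height exactly `h`,
i.e. words whose set of letters is exactly `{0, 1, …, h}`. -/
def heightWeakOrders (n h : ℕ) : Set (List ℕ) :=
  {w | w.length = n ∧ w.toFinset = Finset.range (h + 1)}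

variable {E V : Type} [DecidableEq E] [DecidableEq V]

namespace UC
set_option linter.unusedSectionVars false

def IsClosedChain (R : E → E → Prop) (l : List E) : Prop :=
  l.IsChain R ∧ ∀ x ∈ l.getLast?, ∀ y ∈ l.head?, R x y

variable (s t : E → V)

def EStep (a b : E) : Prop := t a = s b

def IsTrail (F : Finset E) (l : List E) : Prop :=
  l.Nodup ∧ (∀ e ∈ l, e ∈ F) ∧ l.IsChain (EStep s t)

def Balanced (F : Finset E) : Prop :=
  ∀ v : V, (F.filter (fun e => t e = v)).card = (F.filter (fun e => s e = v)).card

/-- counting along a chain -/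
lemma chain_count (v : V) : ∀ (l : List E) (e : E), (e :: l).IsChain (EStep s t) →
    (e :: l).countP (fun x => decide (s x = v)) + (if t ((e :: l).getLast (by simp)) = v then 1 else 0)
      = (e :: l).countP (fun x => decide (t x = v)) + (if s e = v then 1 else 0) := by
  intro l
  induction l with
  | nil =>
      intro e _
      simp only [List.countP_cons, List.countP_nil, List.getLast_singleton]
      by_cases h1 : s e = v <;> by_cases h2 : t e = v <;> simp [h1, h2]
  | cons f l' ih =>
      intro e hch
      rw [List.isChain_cons_cons] at hch
      obtain ⟨hef, hch⟩ := hch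
      have hef' : t e = s f := hef
      have H := ih f hch
      have hlast : ((e :: f :: l').getLast (by simp)) = ((f :: l').getLast (by simp)) := by
        simp [List.getLast_cons]
      rw [hlast, show ((e :: f :: l').countP fun x => decide (s x = v))
            = ((f :: l').countP fun x => decide (s x = v)) + (if s e = v then 1 else 0) by
          rw [List.countP_cons]; by_cases h : s e = v <;> simp [h],
        show ((e :: f :: l').countP fun x => decide (t x = v))
            = ((f :: l').countP fun x => decide (t x = v)) + (if t e = v then 1 else 0) by
          rw [List.countP_cons]; by_cases h : t e = v <;> simp [h]]
      have h23 : (if t e = v then 1 else 0) = (if s f = v then 1 else 0) := by rw [hef']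
      omega

lemma countP_nodup_card (l : List E) (hl : l.Nodup) (p : E → Bool) :
    l.countP p = (l.toFinset.filter (fun e => p e = true)).card := by
  rw [← List.toFinset_filter, List.toFinset_card_of_nodup (hl.filter _),
    ← List.countP_eq_length_filter]

/-- if a trail cannot be extended, it is closed -/
lemma closed_of_no_extension (F : Finset E) (hbal : Balanced s t F) (l : List E) (e₀ : E)
    (htr : IsTrail s t F (e₀ :: l)) (u : V)
    (hu : t ((e₀ :: l).getLast (by simp)) = u)
    (hext : ∀ e ∈ F, e ∉ (e₀ :: l) → s e ≠ u) :
    u = s e₀ := by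
  by_contra hne
  have h1 : F.filter (fun e => s e = u) ⊆ (e₀ :: l).toFinset.filter (fun e => s e = u) := by
    intro x hx
    rw [Finset.mem_filter] at hx ⊢
    refine ⟨List.mem_toFinset.mpr ?_, hx.2⟩
    by_contra hxL
    exact hext x hx.1 hxL hx.2
  have h2 : (e₀ :: l).toFinset.filter (fun e => t e = u) ⊆ F.filter (fun e => t e = u) := by
    intro x hx
    rw [Finset.mem_filter] at hx ⊢
    exact ⟨htr.2.1 x (List.mem_toFinset.mp hx.1), hx.2⟩
  have hc := chain_count s t u l e₀ htr.2.2
  rw [if_pos hu, if_neg (fun hh : s e₀ = u => hne hh.symm)] at hc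
  have e1 : (e₀ :: l).countP (fun x => decide (s x = u))
      = ((e₀ :: l).toFinset.filter (fun e => s e = u)).card := by
    rw [countP_nodup_card _ htr.1]; simp
  have e2 : (e₀ :: l).countP (fun x => decide (t x = u))
      = ((e₀ :: l).toFinset.filter (fun e => t e = u)).card := by
    rw [countP_nodup_card _ htr.1]; simp
  have c1 := Finset.card_le_card h1
  have c2 := Finset.card_le_card h2
  have c3 := hbal u
  omega

lemma exists_closed_trail (F : Finset E) (hbal : Balanced s t F) :
    ∀ (fuel : ℕ) (l : List E) (e₀ : E), IsTrail s t F (e₀ :: l) →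
      F.card ≤ fuel + (e₀ :: l).length →
    ∃ m, IsTrail s t F (e₀ :: m) ∧ t ((e₀ :: m).getLast (by simp)) = s e₀ := by
  intro fuel
  induction fuel with
  | zero =>
      intro l e₀ htr hcard
      refine ⟨l, htr, closed_of_no_extension s t F hbal l e₀ htr _ rfl ?_⟩
      intro e heF heL hse
      have hsub : (e₀ :: l).toFinset ⊆ F := fun x hx => htr.2.1 x (List.mem_toFinset.mp hx)
      have hlt : (e₀ :: l).toFinset.card < F.card := by
        apply Finset.card_lt_card
        refine ⟨hsub, fun hsub2 => heL (List.mem_toFinset.mp (hsub2 heF))⟩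
      rw [List.toFinset_card_of_nodup htr.1] at hlt
      omega
  | succ fuel ih =>
      intro l e₀ htr hcard
      by_cases hext : ∃ e ∈ F, e ∉ (e₀ :: l) ∧ s e = t ((e₀ :: l).getLast (by simp))
      · obtain ⟨e, heF, heL, hse⟩ := hext
        have htr' : IsTrail s t F (e₀ :: (l ++ [e])) := by
          refine ⟨?_, ?_, ?_⟩
          · rw [show e₀ :: (l ++ [e]) = (e₀ :: l) ++ [e] by simp]
            rw [List.nodup_append]
            exact ⟨htr.1, List.nodup_singleton e, by intro a ha b hb; simp at hb; subst hb; rintro rfl; exact heL ha⟩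
          · intro x hx
            rw [show e₀ :: (l ++ [e]) = (e₀ :: l) ++ [e] by simp, List.mem_append] at hx
            rcases hx with hx | hx
            · exact htr.2.1 x hx
            · simp at hx; subst hx; exact heF
          · rw [show e₀ :: (l ++ [e]) = (e₀ :: l) ++ [e] by simp, List.isChain_append]
            refine ⟨htr.2.2, List.isChain_singleton e, ?_⟩
            intro x hx y hy
            simp at hy; subst hy
            rw [List.getLast?_eq_getLast (by simp)] at hx
            simp at hx; subst hx
            exact hse.symm
        exact ih (l ++ [e]) e₀ htr' (by simp at hcard ⊢; omega)
      · push_neg at hext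
        exact ⟨l, htr, closed_of_no_extension s t F hbal l e₀ htr _ rfl hext⟩

end UC

namespace UC
set_option linter.unusedSectionVars false
variable (s t : E → V)

lemma closedChain_rotate {R : E → E → Prop} (la lb : List E)
    (h : IsClosedChain R (la ++ lb)) : IsClosedChain R (lb ++ la) := by
  rcases eq_or_ne la [] with rfl | hla
  · simpa using h
  rcases eq_or_ne lb [] with rfl | hlb
  · simpa using h
  obtain ⟨hc, hcl⟩ := h
  rw [List.isChain_append] at hc
  obtain ⟨h1, h2, h12⟩ := hc
  constructor
  · rw [List.isChain_append]
    refine ⟨h2, h1, ?_⟩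
    intro x hx y hy
    refine hcl x ?_ y ?_
    · rw [List.getLast?_append_of_ne_nil _ hlb]; exact hx
    · rw [List.head?_append_of_ne_nil _ hla]; exact hy
  · intro x hx y hy
    rw [List.getLast?_append_of_ne_nil _ hla] at hx
    rw [List.head?_append_of_ne_nil _ hlb] at hy
    exact h12 x hx y hy

def Conn (F : Finset E) : Prop :=
  ∀ e ∈ F, ∀ e' ∈ F, ∃ w : List E, (∀ x ∈ w, x ∈ F) ∧ w.head? = some e ∧
    w.getLast? = some e' ∧ w.IsChain (EStep s t)

lemma balanced_sdiff (F : Finset E) (hbal : Balanced s t F) (l : List E) (e₀ : E)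
    (htr : IsTrail s t F (e₀ :: l))
    (hclosed : t ((e₀ :: l).getLast (by simp)) = s e₀) :
    Balanced s t (F \ (e₀ :: l).toFinset) := by
  intro v
  have hc := chain_count s t v l e₀ htr.2.2
  have hind : (if t ((e₀ :: l).getLast (by simp)) = v then 1 else 0)
      = (if s e₀ = v then 1 else 0) := by rw [hclosed]
  have hcnt : (e₀ :: l).countP (fun x => decide (s x = v))
      = (e₀ :: l).countP (fun x => decide (t x = v)) := by omega
  have e1 : (e₀ :: l).countP (fun x => decide (s x = v))
      = ((e₀ :: l).toFinset.filter (fun e => s e = v)).card := by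
    rw [countP_nodup_card _ htr.1]; simp
  have e2 : (e₀ :: l).countP (fun x => decide (t x = v))
      = ((e₀ :: l).toFinset.filter (fun e => t e = v)).card := by
    rw [countP_nodup_card _ htr.1]; simp
  have hfil : ∀ p : E → Prop, ∀ _ : DecidablePred p,
      ((F \ (e₀ :: l).toFinset).filter p)
        = (F.filter p) \ ((e₀ :: l).toFinset.filter p) := by
    intro p _
    ext x
    simp only [Finset.mem_filter, Finset.mem_sdiff]
    tauto
  have hsub : ∀ p : E → Prop, ∀ _ : DecidablePred p,
      ((e₀ :: l).toFinset.filter p) ⊆ (F.filter p) := by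
    intro p _ x hx
    rw [Finset.mem_filter] at hx ⊢
    exact ⟨htr.2.1 x (List.mem_toFinset.mp hx.1), hx.2⟩
  rw [hfil _ _, hfil _ _, Finset.card_sdiff_of_subset (hsub _ _), Finset.card_sdiff_of_subset (hsub _ _),
    hbal v]
  omega

lemma exists_first_not (p : E → Prop) [DecidablePred p] :
    ∀ (w : List E), (∃ x ∈ w, ¬ p x) → (∀ hd ∈ w.head?, p hd) →
    ∃ w₁ g w₂, w = w₁ ++ g :: w₂ ∧ w₁ ≠ [] ∧ (∀ x ∈ w₁, p x) ∧ ¬ p g := by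
  intro w
  induction w with
  | nil => simp
  | cons a w' ih =>
      intro hex hhd
      have hpa : p a := hhd a rfl
      cases w' with
      | nil =>
          obtain ⟨x, hx, hnx⟩ := hex
          simp at hx; subst hx
          exact absurd hpa hnx
      | cons b w'' =>
          by_cases hpb : p b
          · have hex' : ∃ x ∈ b :: w'', ¬ p x := by
              obtain ⟨x, hx, hnx⟩ := hex
              rcases List.mem_cons.mp hx with rfl | hx'
              · exact absurd hpa hnx
              · exact ⟨x, hx', hnx⟩
            obtain ⟨w₁, g, w₂, heq, hne, hall, hg⟩ := ih hex'
              (by intro hd hhd'; simp at hhd'; subst hhd'; exact hpb)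
            refine ⟨a :: w₁, g, w₂, by rw [List.cons_append, ← heq], by simp, ?_, hg⟩
            intro x hx
            rcases List.mem_cons.mp hx with rfl | hx'
            · exact hpa
            · exact hall x hx'
          · exact ⟨[a], b, w'', rfl, by simp, by simpa using hpa, hpb⟩

lemma euler_extend (F : Finset E) (hbal : Balanced s t F) (hconn : Conn s t F) :
    ∀ (fuel : ℕ) (l : List E), l ≠ [] → IsTrail s t F l → IsClosedChain (EStep s t) l →
      F.card ≤ fuel + l.length →
      ∃ l', l' ≠ [] ∧ IsTrail s t F l' ∧ IsClosedChain (EStep s t) l' ∧ l'.toFinset = F := by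
  intro fuel
  induction fuel with
  | zero =>
      intro l hne htr hcc hcard
      refine ⟨l, hne, htr, hcc, ?_⟩
      have hsub : l.toFinset ⊆ F := fun x hx => htr.2.1 x (List.mem_toFinset.mp hx)
      refine Finset.eq_of_subset_of_card_le hsub ?_
      rw [List.toFinset_card_of_nodup htr.1]
      omega
  | succ fuel ih =>
      intro l hne htr hcc hcard
      by_cases hT : l.toFinset = F
      · exact ⟨l, hne, htr, hcc, hT⟩
      have hsub : l.toFinset ⊆ F := fun x hx => htr.2.1 x (List.mem_toFinset.mp hx)
      obtain ⟨e, heF, heT⟩ : ∃ e ∈ F, e ∉ l.toFinset := by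
        by_contra hcon; push_neg at hcon
        exact hT (Finset.Subset.antisymm hsub (fun x hx => hcon x hx))
      obtain ⟨e₁, hd⟩ : ∃ e₁, l.head? = some e₁ := by
        cases l with
        | nil => exact absurd rfl hne
        | cons a l' => exact ⟨a, rfl⟩
      have he₁l : e₁ ∈ l := List.mem_of_mem_head? (by rw [hd]; rfl)
      obtain ⟨w, hwF, hwhd, hwlast, hwch⟩ := hconn e₁ (htr.2.1 _ he₁l) e heF
      have heW : e ∈ w := List.mem_of_mem_getLast? (by rw [hwlast]; rfl)
      obtain ⟨w₁, g, w₂, heq, hw₁ne, hall, hg⟩ :=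
        exists_first_not (fun x => x ∈ l) w
          ⟨e, heW, fun hc => heT (List.mem_toFinset.mpr hc)⟩
          (by intro hd' hhd'; rw [hwhd] at hhd'; simp at hhd'; subst hhd'; exact he₁l)
      obtain ⟨prev, hprev⟩ : ∃ prev, w₁.getLast? = some prev :=
        ⟨w₁.getLast hw₁ne, List.getLast?_eq_getLast hw₁ne⟩
      have hRprevg : EStep s t prev g := by
        rw [heq, List.isChain_append] at hwch
        exact hwch.2.2 prev hprev g rfl
      have hprev_l : prev ∈ l := hall prev (List.mem_of_mem_getLast? (by rw [hprev]; rfl))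
      -- balance of the residual graph
      have hlform : e₁ :: l.tail = l := List.cons_head?_tail (by rw [hd]; rfl)
      have hclosed_l : t (l.getLast hne) = s e₁ := by
        have := hcc.2 (l.getLast hne) (by rw [List.getLast?_eq_getLast hne]; rfl) e₁
          (by rw [hd]; rfl)
        exact this
      have hbal' : Balanced s t (F \ l.toFinset) := by
        have := balanced_sdiff s t F hbal l.tail e₁ (by rw [hlform]; exact htr)
          (by
            have h1 : (e₁ :: l.tail).getLast (by simp) = l.getLast hne := by
              congr 1 <;> rw [hlform]
            rw [h1]; exact hclosed_l)
        rwa [hlform] at this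
      have hgF' : g ∈ F \ l.toFinset := by
        rw [Finset.mem_sdiff]
        refine ⟨hwF g (by rw [heq]; simp), fun hc => hg (List.mem_toFinset.mp hc)⟩
      obtain ⟨m, htrm, hclm⟩ := exists_closed_trail s t (F \ l.toFinset) hbal'
        (F \ l.toFinset).card [] g ⟨by simp, by simpa using hgF', by simp⟩ (by simp)
      -- rotate l to end at prev
      obtain ⟨la, lb, hlab⟩ := List.append_of_mem hprev_l
      have hlab' : l = (la ++ [prev]) ++ lb := by rw [hlab]; simp
      have hperm : l.Perm (lb ++ (la ++ [prev])) := by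
        rw [hlab']; exact List.perm_append_comm
      have hccr : IsClosedChain (EStep s t) (lb ++ (la ++ [prev])) := by
        refine closedChain_rotate (la ++ [prev]) lb ?_
        rw [← hlab']; exact hcc
      have hlastr : (lb ++ (la ++ [prev])).getLast? = some prev := by
        rw [List.getLast?_append_of_ne_nil _ (by simp : la ++ [prev] ≠ []),
          List.getLast?_append_of_ne_nil _ (by simp : [prev] ≠ [])]
        rfl
      -- the new closed trail
      set L' := (lb ++ (la ++ [prev])) ++ (g :: m) with hL'
      have hmF' : ∀ x ∈ g :: m, x ∈ F \ l.toFinset := htrm.2.1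
      have hndL' : L'.Nodup := by
        rw [hL', List.nodup_append]
        refine ⟨hperm.nodup_iff.mp htr.1, htrm.1, ?_⟩
        intro x hx1 x' hx2 hxx; subst hxx
        have hxl : x ∈ l := hperm.mem_iff.mpr hx1
        have := hmF' x hx2
        rw [Finset.mem_sdiff] at this
        exact this.2 (List.mem_toFinset.mpr hxl)
      have htrL' : IsTrail s t F L' := by
        refine ⟨hndL', ?_, ?_⟩
        · intro x hx
          rw [hL', List.mem_append] at hx
          rcases hx with hx | hx
          · exact htr.2.1 x (hperm.mem_iff.mpr hx)
          · exact Finset.mem_sdiff.mp (hmF' x hx) |>.1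
        · rw [hL', List.isChain_append]
          refine ⟨hccr.1, htrm.2.2, ?_⟩
          intro x hx y hy
          rw [hlastr] at hx
          simp at hx hy
          subst hx; subst hy
          exact hRprevg
      have hccL' : IsClosedChain (EStep s t) L' := by
        refine ⟨htrL'.2.2, ?_⟩
        intro x hx y hy
        rw [hL', List.getLast?_append_of_ne_nil _ (by simp : g :: m ≠ []),
          List.getLast?_eq_getLast (by simp : g :: m ≠ [])] at hx
        simp at hx
        subst hx
        rw [hL'] at hy
        rcases eq_or_ne lb [] with hlb | hlb
        · rw [hlb] at hy
          simp only [List.nil_append] at hy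
          rw [List.head?_append_of_ne_nil _ (by simp : la ++ [prev] ≠ [])] at hy
          have hy' : y ∈ l.head? := by
            rw [hlab']
            rw [List.head?_append_of_ne_nil _ (by simp : la ++ [prev] ≠ [])]
            exact hy
          -- t (last of (g::m)) = s g = t prev = s (head l)
          show t _ = s y
          rw [hd] at hy'; simp at hy'; subst hy'
          calc t ((g :: m).getLast (by simp)) = s g := hclm
            _ = t prev := hRprevg.symm
            _ = s e₁ := by
                -- prev is the last of l when lb = []
                have hlp : l.getLast? = some prev := by
                  rw [hlab', hlb, List.append_nil,
                    List.getLast?_append_of_ne_nil _ (by simp : [prev] ≠ [])]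
                  rfl
                have : l.getLast hne = prev := Option.some_injective _
                  (by rw [← List.getLast?_eq_getLast hne, hlp])
                rw [← this]; exact hclosed_l
          
        · rw [List.head?_append_of_ne_nil _ (by
            intro hcon
            exact hlb (List.append_eq_nil_iff.mp hcon).1)] at hy
          rw [List.head?_append_of_ne_nil _ hlb] at hy
          -- y = head of lb; closed chain of rotation gives EStep prev y;
          -- and t(last (g::m)) = s g = t prev
          have hstep := hccr.2 prev (by rw [hlastr]; rfl) y (by
            rw [List.head?_append_of_ne_nil _ hlb]; exact hy)
          show t _ = s y
          calc t ((g :: m).getLast (by simp)) = s g := hclm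
            _ = t prev := hRprevg.symm
            _ = s y := hstep
      refine ih L' (by rw [hL']; simp) htrL' hccL' ?_
      have hlen : l.length + 1 ≤ L'.length := by
        have h1 : l.length = (lb ++ (la ++ [prev])).length := hperm.length_eq
        rw [hL']
        simp only [List.length_append, List.length_cons] at h1 ⊢
        omega
      omega

theorem euler_main (F : Finset E) (hbal : Balanced s t F) (hconn : Conn s t F)
    (hFne : F.Nonempty) :
    ∃ l : List E, l ≠ [] ∧ IsTrail s t F l ∧ IsClosedChain (EStep s t) l ∧
      l.toFinset = F := by
  obtain ⟨e₀, he₀⟩ := hFne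
  obtain ⟨m, htrm, hclm⟩ := exists_closed_trail s t F hbal F.card [] e₀
    ⟨by simp, by simpa using he₀, by simp⟩ (by simp)
  refine euler_extend s t F hbal hconn F.card (e₀ :: m) (by simp) htrm ⟨htrm.2.2, ?_⟩
    (by simp)
  intro x hx y hy
  rw [List.getLast?_eq_getLast (by simp : e₀ :: m ≠ [])] at hx
  simp at hx hy
  subst hx; subst hy
  exact hclm

end UC

namespace UC
set_option linter.unusedSectionVars false

/- getD helpers -/
lemma getD_mem {l : List ℕ} {i : ℕ} (h : i < l.length) : l.getD i 0 ∈ l := by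
  rw [List.getD_eq_getElem _ _ h]; exact List.getElem_mem _

lemma getD_append_left {A B : List ℕ} {i : ℕ} (h : i < A.length) :
    (A ++ B).getD i 0 = A.getD i 0 := by
  simp [List.getD_eq_getElem?_getD, List.getElem?_append, h]

lemma getD_append_off (A B : List ℕ) (o : ℕ) :
    (A ++ B).getD (A.length + o) 0 = B.getD o 0 := by
  simp [List.getD_eq_getElem?_getD, List.getElem?_append]

lemma getD_take {l : List ℕ} {m i : ℕ} (h : i < m) :
    (l.take m).getD i 0 = l.getD i 0 := by
  simp [List.getD_eq_getElem?_getD, List.getElem?_take, h]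

lemma getD_tail (l : List ℕ) (j : ℕ) : l.tail.getD j 0 = l.getD (j + 1) 0 := by
  cases l <;> rfl

lemma getD_zero {w : List ℕ} (h : w ≠ []) : w.getD 0 0 = w.headI := by
  cases w with
  | nil => exact absurd rfl h
  | cons a t => rfl

lemma getD_reverse {l : List ℕ} {i : ℕ} (h : i < l.length) :
    l.reverse.getD (l.length - 1 - i) 0 = l.getD i 0 := by
  have h1 : l.length - 1 - i < l.reverse.length := by
    rw [List.length_reverse]; omega
  rw [List.getD_eq_getElem _ _ h1, List.getD_eq_getElem _ _ h]
  rw [List.getElem_reverse]; congr 1; omega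

/-- the set of length-`n` words over `{0,…,k-1}` containing every letter -/
def FullWords (n k : ℕ) : Finset (List ℕ) :=
  ((Finset.univ : Finset (Fin n → Fin k)).image (fun f => List.ofFn (fun i => (f i : ℕ)))).filter
    (fun w => w.toFinset = Finset.range k)

lemma mem_fullWords {n k : ℕ} {w : List ℕ} :
    w ∈ FullWords n k ↔ w.length = n ∧ w.toFinset = Finset.range k := by
  constructor
  · intro hw
    rw [FullWords, Finset.mem_filter] at hw
    obtain ⟨h1, h2⟩ := hw
    refine ⟨?_, h2⟩
    obtain ⟨f, _, rfl⟩ := Finset.mem_image.mp h1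
    simp
  · rintro ⟨hlen, hset⟩
    rw [FullWords, Finset.mem_filter]
    refine ⟨?_, hset⟩
    rw [Finset.mem_image]
    have hlt : ∀ i : ℕ, i < n → w.getD i 0 < k := by
      intro i hi
      have : w.getD i 0 ∈ w.toFinset := List.mem_toFinset.mpr (getD_mem (by omega))
      rw [hset, Finset.mem_range] at this
      exact this
    refine ⟨fun i => ⟨w.getD i 0, hlt i i.isLt⟩, Finset.mem_univ _, ?_⟩
    apply List.ext_getElem
    · simp [hlen]
    · intro i h1 h2
      simp only [List.getElem_ofFn]
      rw [← List.getD_eq_getElem w 0 h2]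
  
lemma fullWords_nonempty {n k : ℕ} (hk : 0 < k) (hkn : k ≤ n) :
    (FullWords n k).Nonempty := by
  refine ⟨List.range k ++ List.replicate (n - k) 0, mem_fullWords.mpr ⟨by simp; omega, ?_⟩⟩
  ext x
  simp only [List.toFinset_append, Finset.mem_union, List.mem_toFinset, List.mem_range,
    Finset.mem_range, List.mem_replicate]
  constructor
  · rintro (hx | ⟨-, rfl⟩)
    · exact hx
    · exact hk
  · intro hx; left; exact hx

lemma balanced_fullWords {n k : ℕ} (hn : 0 < n) :
    Balanced (fun e : List ℕ => e.dropLast) (fun e => e.tail) (FullWords n k) := by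
  intro v
  apply Finset.card_bij (fun e _ => v ++ [e.headI])
  · intro e he
    rw [Finset.mem_filter] at he ⊢
    obtain ⟨heF, hev⟩ := he
    obtain ⟨hlen, hset⟩ := mem_fullWords.mp heF
    have hene : e ≠ [] := by intro hcon; rw [hcon] at hlen; simp at hlen; omega
    have hcons : e.headI :: e.tail = e := by
      cases e with
      | nil => exact absurd rfl hene
      | cons a t => rfl
    refine ⟨mem_fullWords.mpr ⟨?_, ?_⟩, ?_⟩
    · rw [List.length_append]
      simp only [List.length_singleton]
      have : e.tail.length = n - 1 := by rw [List.length_tail, hlen]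
      rw [← hev, this]; omega
    · rw [← hset, ← hcons]
      simp only [List.toFinset_append, List.toFinset_cons, ← hev]
      ext x
      simp [List.mem_toFinset]
    · simp only []
      rw [List.dropLast_concat]
  · intro e1 h1 e2 h2 heq
    rw [Finset.mem_filter] at h1 h2
    have hne1 : e1 ≠ [] := by
      intro hcon
      have := (mem_fullWords.mp h1.1).1
      rw [hcon] at this; simp at this; omega
    have hne2 : e2 ≠ [] := by
      intro hcon
      have := (mem_fullWords.mp h2.1).1
      rw [hcon] at this; simp at this; omega
    have hh : e1.headI = e2.headI := by
      have := congrArg (fun l : List ℕ => l.getLast?) heq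
      simpa [List.getLast?_append] using this
    calc e1 = e1.headI :: e1.tail := by
            cases e1 with
            | nil => exact absurd rfl hne1
            | cons a t => rfl
      _ = e2.headI :: e2.tail := by
            rw [hh, show e1.tail = v from h1.2, show e2.tail = v from h2.2]
      _ = e2 := by
            cases e2 with
            | nil => exact absurd rfl hne2
            | cons a t => rfl
  · intro b hb
    rw [Finset.mem_filter] at hb
    obtain ⟨hbF, hbv⟩ := hb
    have hblen := (mem_fullWords.mp hbF).1
    have hbv' : b.dropLast = v := hbv
    have hbne : b ≠ [] := by intro hcon; rw [hcon] at hblen; simp at hblen; omega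
    refine ⟨b.getLast hbne :: v, ?_, ?_⟩
    · rw [Finset.mem_filter]
      constructor
      · rw [mem_fullWords]
        have hbrep : b.dropLast ++ [b.getLast hbne] = b := List.dropLast_append_getLast hbne
        constructor
        · have : v.length = n - 1 := by
            rw [← hbv, List.length_dropLast, hblen]
          simp [this]; omega
        · have hcast : (b.getLast hbne :: v).toFinset
              = (b.dropLast ++ [b.getLast hbne]).toFinset := by
            rw [← hbv']
            ext x
            simp [List.mem_toFinset]
          rw [hcast, hbrep, (mem_fullWords.mp hbF).2]
      · rfl
    · simp only [List.headI]
      rw [← hbv', List.dropLast_append_getLast hbne]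


end UC

namespace UC
set_option linter.unusedSectionVars false

lemma getD_mem' {l : List ℕ} {i : ℕ} (h : i < l.length) : l.getD i 0 ∈ l := by
  rw [List.getD_eq_getElem _ _ h]; exact List.getElem_mem _

lemma getD_append_left' {A B : List ℕ} {i : ℕ} (h : i < A.length) :
    (A ++ B).getD i 0 = A.getD i 0 := by
  simp [List.getD_eq_getElem?_getD, List.getElem?_append, h]

lemma getD_take' {l : List ℕ} {m i : ℕ} (h : i < m) :
    (l.take m).getD i 0 = l.getD i 0 := by
  simp [List.getD_eq_getElem?_getD, List.getElem?_take, h]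

lemma getD_drop (l : List ℕ) (j m : ℕ) : (l.drop j).getD m 0 = l.getD (j + m) 0 := by
  simp [List.getD_eq_getElem?_getD, List.getElem?_drop]

lemma dedup_index_le : ∀ (l : List ℕ) (y : ℕ), y ∈ l →
    ∃ i, i < l.length ∧ l.getD i 0 = y ∧ List.idxOf y l.dedup ≤ i := by
  intro l
  induction l with
  | nil => simp
  | cons a l' ih =>
      intro y hy
      by_cases hyl : y ∈ l'
      · obtain ⟨i, hi, hgi, hidx⟩ := ih y hyl
        by_cases hal : a ∈ l'
        · rw [List.dedup_cons_of_mem hal]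
          exact ⟨i + 1, by simp; omega, hgi, by omega⟩
        · rw [List.dedup_cons_of_notMem hal]
          have hya : y ≠ a := fun h => hal (h ▸ hyl)
          rw [List.idxOf_cons_ne _ (fun h => hya h.symm)]
          exact ⟨i + 1, by simp; omega, hgi, by omega⟩
      · have hya : y = a := by
          rcases List.mem_cons.mp hy with h | h
          · exact h
          · exact absurd h hyl
        subst hya
        rw [List.dedup_cons_of_notMem hyl]
        exact ⟨0, by simp, rfl, by simp [List.idxOf_cons_self]⟩

lemma sublist_idxOf_le {l₁ l₂ : List ℕ} (hs : l₁.Sublist l₂) (hn : l₂.Nodup) :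
    ∀ y ∈ l₁, List.idxOf y l₁ ≤ List.idxOf y l₂ := by
  induction hs with
  | slnil => simp
  | cons a hs ih =>
      intro y hy
      have hnc := List.nodup_cons.mp hn
      have hne : a ≠ y := fun h => hnc.1 (h ▸ hs.subset hy)
      rw [List.idxOf_cons_ne _ hne]
      have := ih hnc.2 y hy
      omega
  | cons_cons a hs ih =>
      intro y hy
      have hnc := List.nodup_cons.mp hn
      rcases List.mem_cons.mp hy with rfl | hy'
      · simp [List.idxOf_cons_self]
      · have hne : a ≠ y := fun h => hnc.1 (h ▸ hs.subset hy')
        rw [List.idxOf_cons_ne _ hne, List.idxOf_cons_ne _ hne]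
        have := ih hnc.2 y hy'
        omega

lemma getD_idxOf_append (A B : List ℕ) (x : ℕ) (hx : x ∈ A) :
    (A ++ B).getD (List.idxOf x A) 0 = x := by
  have h1 : List.idxOf x A < A.length := List.idxOf_lt_length_iff.mpr hx
  rw [getD_append_left' h1, List.getD_eq_getElem _ _ h1]
  exact List.idxOf_get h1

def Compat (k : ℕ) (B B' : List ℕ) : Prop :=
  ∀ y < k, ∃ i' i : ℕ, i' ≤ i ∧ i < B.length ∧ B.getD i 0 = y ∧
    i' < B'.length ∧ B'.getD i' 0 = y

lemma window_full {k : ℕ} {B B' : List ℕ} (hB : B.toFinset = Finset.range k)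
    (hB' : B'.toFinset = Finset.range k)
    (hc : Compat k B B') (j : ℕ) :
    (B.drop j ++ B'.take j).toFinset = Finset.range k := by
  ext y
  simp only [List.toFinset_append, Finset.mem_union, List.mem_toFinset, Finset.mem_range]
  constructor
  · rintro (hy | hy)
    · have : y ∈ B := (List.drop_sublist j B).subset hy
      have := List.mem_toFinset.mpr this
      rw [hB, Finset.mem_range] at this; exact this
    · have : y ∈ B' := (List.take_sublist j B').subset hy
      have := List.mem_toFinset.mpr this
      rw [hB', Finset.mem_range] at this; exact this
  · intro hy
    obtain ⟨i', i, hii, hiB, hgi, hi'B, hgi'⟩ := hc y hy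
    by_cases hij : j ≤ i
    · left
      have hlen : i - j < (B.drop j).length := by rw [List.length_drop]; omega
      have : (B.drop j).getD (i - j) 0 = y := by
        rw [getD_drop, show j + (i - j) = i by omega, hgi]
      rw [← this]; exact getD_mem' hlen
    · right
      have hi'j : i' < j := by omega
      have hlen : i' < (B'.take j).length := by
        rw [List.length_take]; omega
      have : (B'.take j).getD i' 0 = y := by rw [getD_take' hi'j, hgi']
      rw [← this]; exact getD_mem' hlen


end UC

namespace UC
set_option linter.unusedSectionVars false

def plist (w : List ℕ) : List ℕ := (w.reverse.dedup).reverse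

def rho (u w : List ℕ) (j : ℕ) : List ℕ :=
  u.dedup.filter (fun x => decide (x ∈ (plist w).take j))

def Vb (n k : ℕ) (u w : List ℕ) (j : ℕ) : List ℕ :=
  rho u w j ++ List.replicate (n - k) 0 ++ (plist w).drop j

def Vb' (n k : ℕ) (u w : List ℕ) (j : ℕ) : List ℕ :=
  rho u w j ++ List.replicate (n - k - 1) 0 ++ (plist w).drop (j - 1)

lemma dedup_toFinset (l : List ℕ) : l.dedup.toFinset = l.toFinset := by
  ext x; simp [List.mem_toFinset, List.mem_dedup]

lemma plist_nodup (w : List ℕ) : (plist w).Nodup :=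
  List.nodup_reverse.mpr (List.nodup_dedup _)

lemma plist_toFinset {k : ℕ} {w : List ℕ} (hw : w.toFinset = Finset.range k) :
    (plist w).toFinset = Finset.range k := by
  rw [plist, List.toFinset_reverse, dedup_toFinset, List.toFinset_reverse, hw]

lemma plist_length {k : ℕ} {w : List ℕ} (hw : w.toFinset = Finset.range k) :
    (plist w).length = k := by
  have h := List.toFinset_card_of_nodup (plist_nodup w)
  rw [plist_toFinset hw, Finset.card_range] at h
  omega

lemma mem_plist_iff {k : ℕ} {w : List ℕ} (hw : w.toFinset = Finset.range k) {x : ℕ} :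
    x ∈ plist w ↔ x < k := by
  rw [← List.mem_toFinset, plist_toFinset hw, Finset.mem_range]

lemma q_toFinset {k : ℕ} {u : List ℕ} (hu : u.toFinset = Finset.range k) :
    u.dedup.toFinset = Finset.range k := by rw [dedup_toFinset, hu]

lemma q_length {k : ℕ} {u : List ℕ} (hu : u.toFinset = Finset.range k) :
    u.dedup.length = k := by
  have h := List.toFinset_card_of_nodup (List.nodup_dedup u)
  rw [q_toFinset hu, Finset.card_range] at h
  omega

lemma mem_q_iff {k : ℕ} {u : List ℕ} (hu : u.toFinset = Finset.range k) {x : ℕ} :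
    x ∈ u.dedup ↔ x < k := by
  rw [← List.mem_toFinset, q_toFinset hu, Finset.mem_range]

lemma take_subset_succ (l : List ℕ) (j : ℕ) {x : ℕ} (hx : x ∈ l.take j) :
    x ∈ l.take (j + 1) := by
  have hsub : l.take j = (l.take (j + 1)).take j := by
    rw [List.take_take, min_eq_left (by omega)]
  rw [hsub] at hx
  exact (List.take_sublist _ _).subset hx

lemma mem_rho_iff {k : ℕ} {u w : List ℕ} (hu : u.toFinset = Finset.range k)
    (hw : w.toFinset = Finset.range k) {j x : ℕ} :
    x ∈ rho u w j ↔ x ∈ (plist w).take j := by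
  rw [rho, List.mem_filter]
  simp only [decide_eq_true_eq]
  constructor
  · exact fun h => h.2
  · intro h
    refine ⟨?_, h⟩
    have : x ∈ plist w := (List.take_sublist _ _).subset h
    rw [mem_plist_iff hw] at this
    rw [mem_q_iff hu]
    exact this

lemma rho_nodup (u w : List ℕ) (j : ℕ) : (rho u w j).Nodup :=
  (List.nodup_dedup u).filter _

lemma rho_length {k : ℕ} {u w : List ℕ} (hu : u.toFinset = Finset.range k)
    (hw : w.toFinset = Finset.range k) {j : ℕ} (hj : j ≤ k) :
    (rho u w j).length = j := by
  have h1 : (rho u w j).toFinset = ((plist w).take j).toFinset := by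
    ext x
    simp only [List.mem_toFinset]
    exact mem_rho_iff hu hw
  have h2 := List.toFinset_card_of_nodup (rho_nodup u w j)
  have h3 := List.toFinset_card_of_nodup ((plist_nodup w).sublist (List.take_sublist j _))
  rw [h1, h3] at h2
  rw [List.length_take, plist_length hw] at h2
  omega

lemma rho_succ (u w : List ℕ) (j : ℕ) :
    rho u w j = (rho u w (j + 1)).filter (fun x => decide (x ∈ (plist w).take j)) := by
  rw [rho, rho, List.filter_filter]
  apply List.filter_congr
  intro x _
  by_cases h1 : x ∈ (plist w).take j
  · simp [h1, take_subset_succ _ _ h1]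
  · simp [h1]

lemma rho_sublist (u w : List ℕ) (j : ℕ) : (rho u w j).Sublist (rho u w (j + 1)) := by
  rw [rho_succ u w j]
  exact List.filter_sublist

lemma Vb_length {n k : ℕ} {u w : List ℕ} (hu : u.toFinset = Finset.range k)
    (hw : w.toFinset = Finset.range k) (hkn : k ≤ n) {j : ℕ} (hj : j ≤ k) :
    (Vb n k u w j).length = n := by
  rw [Vb]
  simp only [List.length_append, List.length_replicate, List.length_drop,
    rho_length hu hw hj, plist_length hw]
  omega

lemma Vb'_length {n k : ℕ} {u w : List ℕ} (hu : u.toFinset = Finset.range k)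
    (hw : w.toFinset = Finset.range k) (hkn : k + 1 ≤ n) {j : ℕ} (hj1 : 1 ≤ j) (hj : j ≤ k) :
    (Vb' n k u w j).length = n := by
  rw [Vb']
  simp only [List.length_append, List.length_replicate, List.length_drop,
    rho_length hu hw hj, plist_length hw]
  omega

lemma Vb_front {n k : ℕ} (u w : List ℕ) (j : ℕ) {x : ℕ} (hx : x ∈ rho u w j) :
    (Vb n k u w j).getD (List.idxOf x (rho u w j)) 0 = x := by
  rw [Vb, List.append_assoc]
  exact getD_idxOf_append _ _ _ hx

lemma Vb'_front {n k : ℕ} (u w : List ℕ) (j : ℕ) {x : ℕ} (hx : x ∈ rho u w j) :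
    (Vb' n k u w j).getD (List.idxOf x (rho u w j)) 0 = x := by
  rw [Vb', List.append_assoc]
  exact getD_idxOf_append _ _ _ hx

lemma Vb_back {n k : ℕ} {u w : List ℕ} (hu : u.toFinset = Finset.range k)
    (hw : w.toFinset = Finset.range k) (hkn : k ≤ n) {j r : ℕ} (hj : j ≤ k)
    (hr1 : j ≤ r) :
    (Vb n k u w j).getD (n - k + r) 0 = (plist w).getD r 0 := by
  rw [Vb]
  have hfront : (rho u w j ++ List.replicate (n - k) 0).length = j + (n - k) := by
    simp [rho_length hu hw hj]
  rw [show n - k + r = (rho u w j ++ List.replicate (n - k) 0).length + (r - j) by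
      rw [hfront]; omega,
    getD_append_off, getD_drop, show j + (r - j) = r by omega]

lemma Vb'_back {n k : ℕ} {u w : List ℕ} (hu : u.toFinset = Finset.range k)
    (hw : w.toFinset = Finset.range k) (hkn : k + 1 ≤ n) {j r : ℕ} (hj1 : 1 ≤ j) (hj : j ≤ k)
    (hr1 : j - 1 ≤ r) :
    (Vb' n k u w j).getD (n - k + r) 0 = (plist w).getD r 0 := by
  rw [Vb']
  have hfront : (rho u w j ++ List.replicate (n - k - 1) 0).length = j + (n - k - 1) := by
    simp [rho_length hu hw hj]
  rw [show n - k + r = (rho u w j ++ List.replicate (n - k - 1) 0).length + (r - (j - 1)) by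
      rw [hfront]; omega,
    getD_append_off, getD_drop, show j - 1 + (r - (j - 1)) = r by omega]

lemma Vb_full {n k : ℕ} {u w : List ℕ} (hu : u.toFinset = Finset.range k)
    (hw : w.toFinset = Finset.range k) (hk : 0 < k) (hkn : k + 1 ≤ n) {j : ℕ} (hj : j ≤ k) :
    (Vb n k u w j).toFinset = Finset.range k := by
  ext y
  rw [Vb]
  simp only [List.toFinset_append, Finset.mem_union, List.mem_toFinset, Finset.mem_range,
    List.mem_replicate]
  constructor
  · rintro ((hy | ⟨-, rfl⟩) | hy)
    · rw [mem_rho_iff hu hw] at hy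
      rw [← mem_plist_iff hw]
      exact (List.take_sublist _ _).subset hy
    · exact hk
    · rw [← mem_plist_iff hw]
      exact (List.drop_sublist _ _).subset hy
  · intro hy
    have : y ∈ plist w := (mem_plist_iff hw).mpr hy
    rw [← List.take_append_drop j (plist w), List.mem_append] at this
    rcases this with hy' | hy'
    · exact Or.inl (Or.inl ((mem_rho_iff hu hw).mpr hy'))
    · exact Or.inr hy'

lemma Vb'_full {n k : ℕ} {u w : List ℕ} (hu : u.toFinset = Finset.range k)
    (hw : w.toFinset = Finset.range k) (hk : 0 < k) (hkn : k + 1 ≤ n) {j : ℕ}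
    (hj1 : 1 ≤ j) (hj : j ≤ k) :
    (Vb' n k u w j).toFinset = Finset.range k := by
  ext y
  rw [Vb']
  simp only [List.toFinset_append, Finset.mem_union, List.mem_toFinset, Finset.mem_range,
    List.mem_replicate]
  constructor
  · rintro ((hy | ⟨-, rfl⟩) | hy)
    · rw [mem_rho_iff hu hw] at hy
      rw [← mem_plist_iff hw]
      exact (List.take_sublist _ _).subset hy
    · exact hk
    · rw [← mem_plist_iff hw]
      exact (List.drop_sublist _ _).subset hy
  · intro hy
    have : y ∈ plist w := (mem_plist_iff hw).mpr hy
    rw [← List.take_append_drop (j - 1) (plist w), List.mem_append] at this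
    rcases this with hy' | hy'
    · refine Or.inl (Or.inl ((mem_rho_iff hu hw).mpr ?_))
      have : (plist w).take (j - 1) = ((plist w).take j).take (j - 1) := by
        rw [List.take_take, min_eq_left (by omega)]
      rw [this] at hy'
      exact (List.take_sublist _ _).subset hy'
    · exact Or.inr hy'

end UC

namespace UC
set_option linter.unusedSectionVars false

lemma getD_idxOf (l : List ℕ) (x : ℕ) (hx : x ∈ l) :
    l.getD (List.idxOf x l) 0 = x := by
  have h1 : List.idxOf x l < l.length := List.idxOf_lt_length_iff.mpr hx
  rw [List.getD_eq_getElem _ _ h1]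
  exact List.idxOf_get h1

lemma take_subset_of_le (l : List ℕ) {a b : ℕ} (hab : a ≤ b) {x : ℕ} (hx : x ∈ l.take a) :
    x ∈ l.take b := by
  have hsub : l.take a = (l.take b).take a := by
    rw [List.take_take, min_eq_left hab]
  rw [hsub] at hx
  exact (List.take_sublist _ _).subset hx

lemma rho_k_eq {k : ℕ} {u w : List ℕ} (hu : u.toFinset = Finset.range k)
    (hw : w.toFinset = Finset.range k) : rho u w k = u.dedup := by
  rw [rho]
  apply List.filter_eq_self.mpr
  intro x hx
  simp only [decide_eq_true_eq]
  rw [List.take_of_length_le (le_of_eq (plist_length hw)), mem_plist_iff hw]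
  exact (mem_q_iff hu).mp hx

lemma mem_take_of_idxOf_lt {l : List ℕ} {y j : ℕ} (hy : y ∈ l)
    (hj : List.idxOf y l < j) : y ∈ l.take j := by
  have h1 : List.idxOf y l < l.length := List.idxOf_lt_length_iff.mpr hy
  have h2 : List.idxOf y l < (l.take j).length := by
    rw [List.length_take]; omega
  have := getD_take' (l := l) hj (i := List.idxOf y l)
  rw [getD_idxOf l y hy] at this
  rw [← this]
  exact getD_mem' h2

lemma compat_u_Vbk {n k : ℕ} {u w : List ℕ} (hu : u.toFinset = Finset.range k)
    (hw : w.toFinset = Finset.range k) (hkn : k + 1 ≤ n) (hulen : u.length = n) :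
    Compat k u (Vb n k u w k) := by
  intro y hy
  have hyu : y ∈ u := by rw [← List.mem_toFinset, hu, Finset.mem_range]; exact hy
  obtain ⟨i, hi, hgi, hidx⟩ := dedup_index_le u y hyu
  have hyrho : y ∈ rho u w k := by rw [rho_k_eq hu hw, List.mem_dedup]; exact hyu
  have hidx' : List.idxOf y (rho u w k) = List.idxOf y u.dedup := by
    rw [rho_k_eq hu hw]
  refine ⟨List.idxOf y (rho u w k), i, by omega, hi, hgi, ?_, Vb_front u w k hyrho⟩
  have h1 : List.idxOf y (rho u w k) < (rho u w k).length := List.idxOf_lt_length_iff.mpr hyrho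
  rw [Vb_length hu hw (by omega) (le_refl k), rho_length hu hw (le_refl k)] at *
  omega

lemma compat_Vb_Vb' {n k : ℕ} {u w : List ℕ} (hu : u.toFinset = Finset.range k)
    (hw : w.toFinset = Finset.range k) (hkn : k + 1 ≤ n) {j : ℕ} (hj1 : 1 ≤ j) (hj : j ≤ k) :
    Compat k (Vb n k u w j) (Vb' n k u w j) := by
  intro y hy
  have hyp : y ∈ plist w := (mem_plist_iff hw).mpr hy
  set r := List.idxOf y (plist w) with hr
  have hrk : r < k := by
    have := List.idxOf_lt_length_iff.mpr hyp
    rwa [plist_length hw] at this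
  have hpr : (plist w).getD r 0 = y := getD_idxOf _ _ hyp
  by_cases hrj : r < j
  · have hytake : y ∈ (plist w).take j := mem_take_of_idxOf_lt hyp hrj
    have hyrho : y ∈ rho u w j := (mem_rho_iff hu hw).mpr hytake
    have hlt : List.idxOf y (rho u w j) < (rho u w j).length :=
      List.idxOf_lt_length_iff.mpr hyrho
    rw [rho_length hu hw hj] at hlt
    refine ⟨List.idxOf y (rho u w j), List.idxOf y (rho u w j), le_refl _, ?_,
      Vb_front u w j hyrho, ?_, Vb'_front u w j hyrho⟩
    · rw [Vb_length hu hw (by omega) hj]; omega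
    · rw [Vb'_length hu hw hkn hj1 hj]; omega
  · refine ⟨n - k + r, n - k + r, le_refl _, ?_, ?_, ?_, ?_⟩
    · rw [Vb_length hu hw (by omega) hj]; omega
    · rw [Vb_back hu hw (by omega) hj (by omega), hpr]
    · rw [Vb'_length hu hw hkn hj1 hj]; omega
    · rw [Vb'_back hu hw hkn hj1 hj (by omega), hpr]

lemma compat_Vb'_Vb {n k : ℕ} {u w : List ℕ} (hu : u.toFinset = Finset.range k)
    (hw : w.toFinset = Finset.range k) (hkn : k + 1 ≤ n) {j : ℕ} (hj1 : 1 ≤ j) (hj : j ≤ k) :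
    Compat k (Vb' n k u w j) (Vb n k u w (j - 1)) := by
  intro y hy
  have hyp : y ∈ plist w := (mem_plist_iff hw).mpr hy
  set r := List.idxOf y (plist w) with hr
  have hrk : r < k := by
    have := List.idxOf_lt_length_iff.mpr hyp
    rwa [plist_length hw] at this
  have hpr : (plist w).getD r 0 = y := getD_idxOf _ _ hyp
  by_cases hrj : r < j - 1
  · have hytake : y ∈ (plist w).take (j - 1) := mem_take_of_idxOf_lt hyp hrj
    have hyrho' : y ∈ rho u w (j - 1) := (mem_rho_iff hu hw).mpr hytake
    have hyrho : y ∈ rho u w j :=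
      (mem_rho_iff hu hw).mpr (take_subset_of_le _ (by omega) hytake)
    have hsub : (rho u w (j - 1)).Sublist (rho u w j) := by
      have := rho_sublist u w (j - 1)
      rwa [Nat.sub_add_cancel hj1] at this
    have hle := sublist_idxOf_le hsub (rho_nodup u w j) y hyrho'
    have hlt : List.idxOf y (rho u w j) < (rho u w j).length :=
      List.idxOf_lt_length_iff.mpr hyrho
    have hlt' : List.idxOf y (rho u w (j - 1)) < (rho u w (j - 1)).length :=
      List.idxOf_lt_length_iff.mpr hyrho'
    rw [rho_length hu hw hj] at hlt
    rw [rho_length hu hw (by omega)] at hlt'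
    refine ⟨List.idxOf y (rho u w (j - 1)), List.idxOf y (rho u w j), hle, ?_,
      Vb'_front u w j hyrho, ?_, Vb_front u w (j - 1) hyrho'⟩
    · rw [Vb'_length hu hw hkn hj1 hj]; omega
    · rw [Vb_length hu hw (by omega) (by omega)]; omega
  · refine ⟨n - k + r, n - k + r, le_refl _, ?_, ?_, ?_, ?_⟩
    · rw [Vb'_length hu hw hkn hj1 hj]; omega
    · rw [Vb'_back hu hw hkn hj1 hj (by omega), hpr]
    · rw [Vb_length hu hw (by omega) (by omega)]; omega
    · rw [Vb_back hu hw (by omega) (by omega) (by omega), hpr]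

lemma compat_Vb0_w {n k : ℕ} {u w : List ℕ} (hu : u.toFinset = Finset.range k)
    (hw : w.toFinset = Finset.range k) (hk : 0 < k) (hkn : k + 1 ≤ n)
    (hwlen : w.length = n) :
    Compat k (Vb n k u w 0) w := by
  intro y hy
  have hyw : y ∈ w := by rw [← List.mem_toFinset, hw, Finset.mem_range]; exact hy
  have hyrev : y ∈ w.reverse := List.mem_reverse.mpr hyw
  obtain ⟨irev, hirev, hgirev, hidx⟩ := dedup_index_le w.reverse y hyrev
  rw [List.length_reverse, hwlen] at hirev
  set rd := w.reverse.dedup with hrd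
  set idx := List.idxOf y rd with hidxdef
  have hyrd : y ∈ rd := by rw [hrd, List.mem_dedup]; exact hyrev
  have hrdlen : rd.length = k := by
    have h1 : (plist w).length = k := plist_length hw
    rw [plist, List.length_reverse] at h1
    exact h1
  have hidxk : idx < k := by
    have := List.idxOf_lt_length_iff.mpr hyrd
    rwa [hrdlen] at this
  -- occurrence in w at position n - 1 - irev
  have hw_occ : w.getD (n - 1 - irev) 0 = y := by
    have h1 : n - 1 - irev < w.length := by rw [hwlen]; omega
    have := getD_reverse (l := w) (i := n - 1 - irev) h1
    rw [hwlen, show n - 1 - (n - 1 - irev) = irev by omega] at this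
    rw [← this, hgirev]
  -- occurrence in Vb 0 at position n - k + (k - 1 - idx)
  have hplist_occ : (plist w).getD (k - 1 - idx) 0 = y := by
    have h1 : idx < rd.length := by rw [hrdlen]; exact hidxk
    have := getD_reverse (l := rd) (i := idx) h1
    rw [hrdlen] at this
    rw [plist, ← hrd, this]
    exact getD_idxOf _ _ hyrd
  have hVb_occ : (Vb n k u w 0).getD (n - k + (k - 1 - idx)) 0 = y := by
    rw [Vb_back hu hw (by omega) (by omega) (by omega), hplist_occ]
  refine ⟨n - 1 - irev, n - k + (k - 1 - idx), by omega, ?_, hVb_occ, by omega, hw_occ⟩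
  rw [Vb_length hu hw (by omega) (by omega)]
  omega

end UC

namespace UC
set_option linter.unusedSectionVars false

def midBlocks (n k : ℕ) (u w : List ℕ) : ℕ → List (List ℕ)
  | 0 => [Vb n k u w 0]
  | (j+1) => Vb n k u w (j+1) :: Vb' n k u w (j+1) :: midBlocks n k u w j

lemma midBlocks_head (n k : ℕ) (u w : List ℕ) (j : ℕ) :
    (midBlocks n k u w j).head? = some (Vb n k u w j) := by
  cases j <;> rfl

lemma midBlocks_ne (n k : ℕ) (u w : List ℕ) (j : ℕ) : midBlocks n k u w j ≠ [] := by
  cases j <;> simp [midBlocks]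

lemma midBlocks_mem {n k : ℕ} {u w : List ℕ} (hu : u.toFinset = Finset.range k)
    (hw : w.toFinset = Finset.range k) (hk : 0 < k) (hkn : k + 1 ≤ n) :
    ∀ j, j ≤ k → ∀ B ∈ midBlocks n k u w j, B ∈ FullWords n k := by
  intro j
  induction j with
  | zero =>
      intro _ B hB
      simp only [midBlocks] at hB
      rw [List.mem_singleton] at hB
      subst hB
      exact mem_fullWords.mpr ⟨Vb_length hu hw (by omega) (by omega),
        Vb_full hu hw hk hkn (by omega)⟩
  | succ j ih =>
      intro hjk B hB
      simp only [midBlocks] at hB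
      rcases List.mem_cons.mp hB with rfl | hB
      · exact mem_fullWords.mpr ⟨Vb_length hu hw (by omega) (by omega),
          Vb_full hu hw hk hkn (by omega)⟩
      rcases List.mem_cons.mp hB with rfl | hB
      · exact mem_fullWords.mpr ⟨Vb'_length hu hw hkn (by omega) (by omega),
          Vb'_full hu hw hk hkn (by omega) (by omega)⟩
      · exact ih (by omega) B hB

lemma midBlocks_chain {n k : ℕ} {u w : List ℕ} (hu : u.toFinset = Finset.range k)
    (hw : w.toFinset = Finset.range k) (hk : 0 < k) (hkn : k + 1 ≤ n)
    (hwlen : w.length = n) :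
    ∀ j, j ≤ k → List.IsChain (Compat k) (midBlocks n k u w j ++ [w]) := by
  intro j
  induction j with
  | zero =>
      intro _
      simp only [midBlocks, List.cons_append, List.nil_append]
      rw [List.isChain_cons]
      refine ⟨?_, List.isChain_singleton w⟩
      intro y hy
      simp at hy
      subst hy
      exact compat_Vb0_w hu hw hk hkn hwlen
  | succ j ih =>
      intro hjk
      simp only [midBlocks, List.cons_append]
      rw [List.isChain_cons]
      constructor
      · intro y hy
        simp at hy
        subst hy
        exact compat_Vb_Vb' hu hw hkn (by omega) (by omega)
      rw [List.isChain_cons]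
      refine ⟨?_, ih (by omega)⟩
      intro y hy
      rw [List.head?_append_of_ne_nil _ (midBlocks_ne n k u w j), midBlocks_head] at hy
      simp at hy
      subst hy
      have := compat_Vb'_Vb hu hw hkn (j := j + 1) (by omega) (by omega)
      simpa using this

def blocksFor (n k : ℕ) (u w : List ℕ) : List (List ℕ) :=
  u :: (midBlocks n k u w k ++ [w])

lemma blocksFor_mem {n k : ℕ} {u w : List ℕ} (hu : u ∈ FullWords n k)
    (hw : w ∈ FullWords n k) (hk : 0 < k) (hkn : k + 1 ≤ n) :
    ∀ B ∈ blocksFor n k u w, B ∈ FullWords n k := by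
  intro B hB
  rw [blocksFor] at hB
  rcases List.mem_cons.mp hB with rfl | hB
  · exact hu
  rcases List.mem_append.mp hB with hB | hB
  · exact midBlocks_mem (mem_fullWords.mp hu).2 (mem_fullWords.mp hw).2 hk hkn k
      (le_refl k) B hB
  · rw [List.mem_singleton] at hB; subst hB; exact hw

lemma blocksFor_chain {n k : ℕ} {u w : List ℕ} (hu : u ∈ FullWords n k)
    (hw : w ∈ FullWords n k) (hk : 0 < k) (hkn : k + 1 ≤ n) :
    List.IsChain (Compat k) (blocksFor n k u w) := by
  obtain ⟨hulen, huset⟩ := mem_fullWords.mp hu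
  obtain ⟨hwlen, hwset⟩ := mem_fullWords.mp hw
  rw [blocksFor, List.isChain_cons]
  constructor
  · intro y hy
    rw [List.head?_append_of_ne_nil _ (midBlocks_ne n k u w k), midBlocks_head] at hy
    simp at hy
    subst hy
    exact compat_u_Vbk huset hwset hkn hulen
  · exact midBlocks_chain huset hwset hk hkn hwlen k (le_refl k)

lemma blocksFor_getLast? (n k : ℕ) (u w : List ℕ) :
    (blocksFor n k u w).getLast? = some w := by
  rw [blocksFor, show u :: (midBlocks n k u w k ++ [w])
      = (u :: midBlocks n k u w k) ++ [w] by simp,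
    List.getLast?_append_of_ne_nil _ (by simp : ([w] : List (List ℕ)) ≠ [])]
  rfl

lemma join_length {n : ℕ} : ∀ (bs : List (List ℕ)), (∀ B ∈ bs, B.length = n) →
    bs.flatten.length = bs.length * n := by
  intro bs
  induction bs with
  | nil => simp
  | cons B bs' ih =>
      intro h
      simp only [List.flatten_cons, List.length_append, List.length_cons]
      rw [h B (by simp), ih (fun B' hB' => h B' (by simp [hB']))]
      ring

lemma join_drop_last {n : ℕ} (hn : 0 < n) : ∀ (bs : List (List ℕ)) (hne : bs ≠ []),
    (∀ B ∈ bs, B.length = n) → bs.flatten.drop (bs.flatten.length - n) = bs.getLast hne := by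
  intro bs
  induction bs with
  | nil => intro hne; exact absurd rfl hne
  | cons B bs' ih =>
      intro hne hlen
      cases bs' with
      | nil =>
          simp only [List.flatten_cons, List.flatten_nil, List.append_nil]
          rw [hlen B (by simp)]
          simp
      | cons B' bs'' =>
          have hrest_len : (B' :: bs'').flatten.length = (B' :: bs'').length * n :=
            join_length _ (fun B0 hB0 => hlen B0 (by simp [hB0]))
          have hrest_ge : n ≤ (B' :: bs'').flatten.length := by
            rw [hrest_len]
            have h2 : 1 * n ≤ (B' :: bs'').length * n :=
              Nat.mul_le_mul_right n (by simp)
            simpa using h2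
          have hBlen : B.length = n := hlen B (by simp)
          rw [show (B :: B' :: bs'').flatten = B ++ (B' :: bs'').flatten from rfl]
          set J := (B' :: bs'').flatten with hJ
          rw [List.getLast_cons (by simp : B' :: bs'' ≠ [])]
          rw [List.drop_append]
          have h2 : (B ++ J).length - n = B.length + (J.length - n) := by
            simp only [List.length_append]
            omega
          rw [h2, show B.length + (J.length - n) - B.length = J.length - n by omega,
            List.drop_eq_nil_of_le (by omega : B.length ≤ B.length + (J.length - n)),
            List.nil_append]
          exact ih (by simp) (fun B0 hB0 => hlen B0 (by simp [hB0]))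

end UC

namespace UC
set_option linter.unusedSectionVars false

def windows (n : ℕ) (S : List ℕ) : List (List ℕ) :=
  (List.range (S.length - n + 1)).map (fun i => (S.drop i).take n)

lemma windows_length {n : ℕ} (S : List ℕ) :
    (windows n S).length = S.length - n + 1 := by simp [windows]

lemma windows_head? {n : ℕ} (S : List ℕ) : (windows n S).head? = some (S.take n) := by
  rw [windows, List.head?_map,
    show (List.range (S.length - n + 1)).head? = some 0 by
      rw [List.head?_eq_getElem?, List.getElem?_range (by omega)]]
  simp

lemma windows_getLast? {n : ℕ} (S : List ℕ) :
    (windows n S).getLast? = some ((S.drop (S.length - n)).take n) := by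
  rw [List.getLast?_eq_getElem?, windows_length]
  simp only [windows, List.getElem?_map, Nat.add_sub_cancel]
  rw [List.getElem?_range (by omega)]
  rfl

lemma windows_get {n : ℕ} (S : List ℕ) (i : ℕ) (hi : i < (windows n S).length) :
    (windows n S).get ⟨i, hi⟩ = (S.drop i).take n := by
  simp [windows]

lemma windows_chain' {n : ℕ} (hn : 0 < n) (S : List ℕ) :
    (windows n S).IsChain (EStep (fun e : List ℕ => e.dropLast) (fun e => e.tail)) := by
  rw [List.isChain_iff_getElem]
  intro i hi
  simp only [windows, List.getElem_map, List.getElem_range]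
  rw [windows_length] at hi
  have hiS : i + 1 + n ≤ S.length := by omega
  show ((S.drop i).take n).tail = ((S.drop (i + 1)).take n).dropLast
  have hL : ((S.drop i).take n).tail = (S.drop (i + 1)).take (n - 1) := by
    rw [← List.drop_one, List.drop_take, List.drop_drop]
  have hlen2 : ((S.drop (i + 1)).take n).length = n := by
    rw [List.length_take, List.length_drop]
    omega
  have hR : ((S.drop (i + 1)).take n).dropLast = (S.drop (i + 1)).take (n - 1) := by
    rw [List.dropLast_eq_take, hlen2, List.take_take, min_eq_left (by omega)]
  rw [hL, hR]

lemma join_window_mem {n k : ℕ} : ∀ (bs : List (List ℕ)), bs ≠ [] →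
    (∀ B ∈ bs, B ∈ FullWords n k) → List.IsChain (Compat k) bs →
    ∀ i, i + n ≤ bs.flatten.length → ((bs.flatten.drop i).take n) ∈ FullWords n k := by
  intro bs
  induction bs with
  | nil => intro h; exact absurd rfl h
  | cons B bs' ih =>
      intro _ hmem hch i hi
      have hBlen : B.length = n := (mem_fullWords.mp (hmem B (by simp))).1
      cases bs' with
      | nil =>
          simp only [List.flatten_cons, List.flatten_nil, List.append_nil] at hi ⊢
          have hi0 : i = 0 := by omega
          subst hi0
          rw [List.drop_zero, List.take_of_length_le (by omega)]
          exact hmem B (by simp)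
      | cons B' bs'' =>
          have hB'len : B'.length = n := (mem_fullWords.mp (hmem B' (by simp))).1
          rw [show (B :: B' :: bs'').flatten = B ++ (B' :: bs'').flatten from rfl] at hi ⊢
          by_cases hin : n ≤ i
          · rw [List.drop_append,
              List.drop_eq_nil_of_le (by omega : B.length ≤ i), List.nil_append]
            have hi' : (i - B.length) + n ≤ (B' :: bs'').flatten.length := by
              rw [List.length_append] at hi
              omega
            exact ih (by simp) (fun B0 h0 => hmem B0 (by simp [h0]))
              (List.isChain_cons_cons.mp hch).2 (i - B.length) hi'
          · push_neg at hin
            have hsplit : ((B ++ (B' :: bs'').flatten).drop i).take n = B.drop i ++ B'.take i := by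
              rw [List.drop_append, show i - B.length = 0 by omega,
                List.drop_zero, List.take_append]
              have h1 : (B.drop i).length = n - i := by rw [List.length_drop, hBlen]
              rw [List.take_of_length_le (by omega : (B.drop i).length ≤ n), h1]
              congr 1
              rw [show n - (n - i) = i by omega,
                show (B' :: bs'').flatten = B' ++ bs''.flatten from rfl,
                List.take_append,
                show i - B'.length = 0 by omega, List.take_zero, List.append_nil]
            rw [hsplit]
            apply mem_fullWords.mpr
            constructor
            · rw [List.length_append, List.length_drop, List.length_take, hBlen, hB'len]
              omega
            · exact window_full (mem_fullWords.mp (hmem B (by simp))).2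
                (mem_fullWords.mp (hmem B' (by simp))).2
                (List.isChain_cons_cons.mp hch).1 i

lemma conn_fullWords {n k : ℕ} (hk : 0 < k) (hkn : k + 1 ≤ n) :
    Conn (fun e : List ℕ => e.dropLast) (fun e => e.tail) (FullWords n k) := by
  intro e he e' he'
  have hbs_mem := blocksFor_mem he he' hk hkn
  have hbs_len : ∀ B ∈ blocksFor n k e e', B.length = n :=
    fun B hB => (mem_fullWords.mp (hbs_mem B hB)).1
  set bs := blocksFor n k e e' with hbs
  set S := bs.flatten with hS
  have hS_len : S.length = bs.length * n := join_length bs hbs_len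
  have hbs_ne : bs ≠ [] := by rw [hbs, blocksFor]; simp
  have hbs_pos : 1 ≤ bs.length := by
    cases hb : bs with
    | nil => exact absurd hb hbs_ne
    | cons a l => simp
  have hS_ge : n ≤ S.length := by
    rw [hS_len]
    calc n = 1 * n := (one_mul n).symm
      _ ≤ bs.length * n := Nat.mul_le_mul_right n hbs_pos
  refine ⟨windows n S, ?_, ?_, ?_, windows_chain' (by omega) S⟩
  · intro x hx
    rw [windows, List.mem_map] at hx
    obtain ⟨i, hi, rfl⟩ := hx
    rw [List.mem_range] at hi
    have hgoal : i + n ≤ bs.flatten.length := by rw [← hS]; omega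
    exact join_window_mem bs hbs_ne hbs_mem (blocksFor_chain he he' hk hkn) i hgoal
  · rw [windows_head?]
    congr 1
    rw [hS, hbs, blocksFor, show (e :: (midBlocks n k e e' k ++ [e'])).flatten
        = e ++ (midBlocks n k e e' k ++ [e']).flatten from rfl]
    exact List.take_left' (mem_fullWords.mp he).1
  · rw [windows_getLast?]
    congr 1
    rw [join_drop_last (by omega) bs hbs_ne hbs_len]
    have hlast : bs.getLast hbs_ne = e' := by
      have h1 := blocksFor_getLast? n k e e'
      rw [← hbs] at h1
      rw [List.getLast?_eq_getLast hbs_ne] at h1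
      simpa using h1
    rw [hlast]
    exact List.take_of_length_le (le_of_eq (mem_fullWords.mp he').1)

end UC


open UC in
/-- For every positive integer `n` and every natural number `h` with `h < n - 1`,
there exists a universal cycle for `W(n,h)`. -/
theorem exists_ucycle_heightWeakOrders (n h : ℕ) (hn : 0 < n) (hh : h < n - 1) :
    ∃ a : ℕ → ℕ,
      IsUCycle n (Nat.card (heightWeakOrders n h)) (heightWeakOrders n h) a := by
  set k := h + 1 with hkdef
  have hk : 0 < k := by omega
  have hkn : k + 1 ≤ n := by omega
  have hn0 : 0 < n := hn
  set F := FullWords n k with hF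
  have hCF : heightWeakOrders n h = ↑F := by
    ext w
    rw [heightWeakOrders, Set.mem_setOf_eq, Finset.mem_coe, hF, mem_fullWords, hkdef]
  obtain ⟨l, hlne, htr, hcc, hlF⟩ := euler_main (fun e : List ℕ => e.dropLast)
    (fun e => e.tail) F (balanced_fullWords hn0) (conn_fullWords hk hkn)
    (fullWords_nonempty hk (by omega))
  set N := l.length with hN
  have hNpos : 0 < N := List.length_pos_iff.mpr hlne
  have hmemF : ∀ i, i < N → l.getD i [] ∈ F := by
    intro i hi
    have hg : l.getD i [] = l.get ⟨i, hi⟩ := List.getD_eq_getElem l [] hi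
    rw [hg]
    exact htr.2.1 _ (l.get_mem _)
  have hwlen : ∀ i, i < N → (l.getD i []).length = n := by
    intro i hi
    exact (mem_fullWords.mp (hmemF i hi)).1
  have hmod1 : ∀ i : ℕ, (i + 1) % N = (i % N + 1) % N := by
    intro i
    conv_lhs => rw [← Nat.mod_add_div i N]
    rw [Nat.add_right_comm, Nat.add_mul_mod_self_left]
  have hmm : ∀ x : ℕ, x % N % N = x % N := fun x => Nat.mod_mod_of_dvd x dvd_rfl
  have hstep : ∀ i : ℕ, (l.getD (i % N) []).tail = (l.getD ((i + 1) % N) []).dropLast := by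
    intro i
    have hiN : i % N < N := Nat.mod_lt _ hNpos
    by_cases hlast : i % N + 1 < N
    · have hmod : (i + 1) % N = i % N + 1 := by
        rw [hmod1 i, Nat.mod_eq_of_lt hlast]
      rw [hmod]
      have hch := List.isChain_iff_getElem.mp htr.2.2 (i % N) (by omega)
      have e1 : l.getD (i % N) [] = l.get ⟨i % N, by omega⟩ :=
        List.getD_eq_getElem l [] (by omega)
      have e2 : l.getD (i % N + 1) [] = l.get ⟨i % N + 1, by omega⟩ :=
        List.getD_eq_getElem l [] (by omega)
      rw [e1, e2]
      exact hch
    · have hmod : (i + 1) % N = 0 := by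
        have : i % N + 1 = N := by omega
        rw [hmod1 i, this, Nat.mod_self]
      have hiN' : i % N = N - 1 := by omega
      rw [hmod, hiN']
      have hgl : l.getD (N - 1) [] = l.getLast hlne := by
        rw [List.getD_eq_getElem l [] (by omega), List.getLast_eq_getElem]
      have hhd : l.head? = some (l.getD 0 []) := by
        cases l with
        | nil => exact absurd rfl hlne
        | cons a t => rfl
      have := hcc.2 (l.getLast hlne) (by rw [List.getLast?_eq_getLast hlne]; rfl)
        (l.getD 0 []) (by rw [hhd]; rfl)
      rw [hgl]
      exact this
  have KW : ∀ j, j < n → ∀ i : ℕ,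
      (l.getD (i % N) []).getD j 0 = (l.getD ((i + j) % N) []).headI := by
    intro j
    induction j with
    | zero =>
        intro _ i
        rw [Nat.add_zero]
        exact getD_zero (by
          have := hwlen (i % N) (Nat.mod_lt _ hNpos)
          intro hc
          rw [hc] at this
          simp at this
          omega)
    | succ j ih =>
        intro hjn i
        have h1 : (l.getD (i % N) []).getD (j + 1) 0
            = (l.getD (i % N) []).tail.getD j 0 := (getD_tail _ j).symm
        rw [h1, hstep i]
        have hlen2 : (l.getD ((i + 1) % N) []).length = n :=
          hwlen _ (Nat.mod_lt _ hNpos)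
        have h2 : (l.getD ((i + 1) % N) []).dropLast.getD j 0
            = (l.getD ((i + 1) % N) []).getD j 0 := by
          rw [List.dropLast_eq_take, hlen2, getD_take' (by omega)]
        rw [h2, ih (by omega) (i + 1), show i + 1 + j = i + (j + 1) by omega]
  have hNcard : Nat.card (heightWeakOrders n h) = N := by
    rw [hCF, Nat.card_coe_set_eq, Set.ncard_coe_finset, ← hlF,
      List.toFinset_card_of_nodup htr.1]
  have hwin : ∀ i, i < N →
      (List.ofFn fun j : Fin n => (l.getD ((i + j.val) % N % N) []).headI) = l.getD i [] := by
    intro i hi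
    apply List.ext_getElem
    · rw [List.length_ofFn, hwlen i hi]
    · intro j h1 h2
      simp only [List.getElem_ofFn]
      have hj : j < n := by simpa using h1
      rw [hmm, ← KW j hj i, Nat.mod_eq_of_lt hi]
      exact List.getD_eq_getElem _ 0 h2
  refine ⟨fun i => (l.getD (i % N) []).headI, ?_, ?_⟩
  · intro i hi
    rw [hNcard] at hi ⊢
    rw [hwin i hi, hCF]
    exact Finset.mem_coe.mpr (hmemF i hi)
  · intro c hc
    rw [hCF, Finset.mem_coe, ← hlF, List.mem_toFinset] at hc
    obtain ⟨⟨i₀, hi₀⟩, hgi₀⟩ := List.mem_iff_get.mp hc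
    have hgetidx : l.getD i₀ [] = c := by
      rw [List.getD_eq_getElem l [] hi₀]
      exact hgi₀
    refine ⟨i₀, ⟨by rw [hNcard]; exact hi₀, ?_⟩, ?_⟩
    · rw [hNcard, hwin _ hi₀]
      exact hgetidx
    · intro y hy
      rw [hNcard] at hy
      obtain ⟨hy1, hy2⟩ := hy
      rw [hwin _ hy1] at hy2
      have hgy : l[y] = l[i₀] := by
        rw [← List.getD_eq_getElem l [] hy1, ← List.getD_eq_getElem l [] hi₀,
          hy2, hgetidx]
      have hgy' : l.get ⟨y, hy1⟩ = l.get ⟨i₀, hi₀⟩ := by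
        rw [List.get_eq_getElem, List.get_eq_getElem]; exact hgy
      have := (htr.1.get_inj_iff).mp hgy'
      simpa using this
end
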